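/- arXiv:1709.09653 — 6 statements merged into one kernel-verified Lean document; each statement's English description precedes it below -/
import Mathlib

section
/- Let J ∈ M₄(ℂ) have rows (i,1,0,0), (0,i,0,0), (0,0,−i,1), (0,0,0,−i); let E₄₁ ∈ M₄(ℂ) be the matrix whose only nonzero entry is a 1 in position (4,1); let E := Θ⁻¹E₄₁Θ; let N ∈ M₄(ℂ) have rows (−i/8, 0, 0, 0), (−1/4, −i/8, 0, 0), (0, 0, i/8, 0), (0, 0, −1/4, i/8); and let Φ₁ ∈ M₄(ℂ) have rows (−3/16, −i/8, 3/16, −i/8), (i/8, −3/16, −i/8, −1/16), (3/16, i/8, −3/16, i/8), (i/8, −1/16, −i/8, −3/16). Then JΦ₁ − Φ₁J = N − E. Equivalently, for all μ ∈ ℂ, (J + μE)(I + μΦ₁) − (I + μΦ₁)(J + μN) = μ²(EΦ₁ − Φ₁N); that is, the near-identity linear change of variables I + μΦ₁ conjugates J + μE into J + μN up to terms of order μ². -/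
/-- The Jordan normal form J with double non-semisimple eigenvalues ±i. -/
noncomputable def SHmatJ : Matrix (Fin 4) (Fin 4) ℂ :=
  !![Complex.I, 1, 0, 0;
     0, Complex.I, 0, 0;
     0, 0, -Complex.I, 1;
     0, 0, 0, -Complex.I]

/-- The linearizing change of variables Θ. -/
noncomputable def SHmatTheta : Matrix (Fin 4) (Fin 4) ℂ :=
  !![1, 0, 1, 0;
     Complex.I, 1, -Complex.I, 1;
     0, 2 * Complex.I, 0, -2 * Complex.I;
     0, -2, 0, -2]

/-- The elementary matrix with a single 1 in position (4,1). -/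
noncomputable def SHmatE41 : Matrix (Fin 4) (Fin 4) ℂ :=
  !![0, 0, 0, 0; 0, 0, 0, 0; 0, 0, 0, 0; 1, 0, 0, 0]

/-- The linearization of the parameter term in Jordan coordinates. -/
noncomputable def SHmatE : Matrix (Fin 4) (Fin 4) ℂ :=
  SHmatTheta⁻¹ * SHmatE41 * SHmatTheta

/-- The μ-linear part of the normal form. -/
noncomputable def SHmatN : Matrix (Fin 4) (Fin 4) ℂ :=
  !![-Complex.I / 8, 0, 0, 0;
     -1 / 4, -Complex.I / 8, 0, 0;
     0, 0, Complex.I / 8, 0;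
     0, 0, -1 / 4, Complex.I / 8]

/-- The explicit μ-dependent part Φ₁ of the normal form transformation. -/
noncomputable def SHmatPhi1 : Matrix (Fin 4) (Fin 4) ℂ :=
  !![-3 / 16, -Complex.I / 8, 3 / 16, -Complex.I / 8;
     Complex.I / 8, -3 / 16, -Complex.I / 8, -1 / 16;
     3 / 16, Complex.I / 8, -3 / 16, Complex.I / 8;
     Complex.I / 8, -1 / 16, -Complex.I / 8, -3 / 16]


noncomputable def SHmatThetaInv : Matrix (Fin 4) (Fin 4) ℂ :=
  !![1/2, -Complex.I/2, 0, -Complex.I/4;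
     0, 0, -Complex.I/4, -1/4;
     1/2, Complex.I/2, 0, Complex.I/4;
     0, 0, Complex.I/4, -1/4]

lemma theta_inv_eq : SHmatTheta⁻¹ = SHmatThetaInv := by
  apply Matrix.inv_eq_left_inv
  ext i j
  fin_cases i <;> fin_cases j <;>
    simp [SHmatTheta, SHmatThetaInv, Matrix.mul_apply, Fin.sum_univ_four, Matrix.vecHead, Matrix.vecTail] <;> ring_nf <;> simp [Complex.I_sq] <;> ring_nf

lemma E_eq : SHmatE = !![-Complex.I/4, 0, -Complex.I/4, 0;
     -1/4, 0, -1/4, 0;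
     Complex.I/4, 0, Complex.I/4, 0;
     -1/4, 0, -1/4, 0] := by
  rw [SHmatE, theta_inv_eq]
  ext i j
  fin_cases i <;> fin_cases j <;>
    simp [SHmatTheta, SHmatThetaInv, SHmatE41, Matrix.mul_apply, Fin.sum_univ_four, Matrix.vecHead, Matrix.vecTail] <;> ring_nf <;> simp [Complex.I_sq] <;> ring_nf


lemma key_abstract (J E N Φ : Matrix (Fin 4) (Fin 4) ℂ) (μ : ℂ)
    (h : J * Φ - Φ * J = N - E) :
    (J + μ • E) * (1 + μ • Φ) - (1 + μ • Φ) * (J + μ • N)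
      = (μ ^ 2) • (E * Φ - Φ * N) := by
  rw [sub_eq_iff_eq_add] at h
  simp only [mul_add, add_mul, mul_one, one_mul, Matrix.mul_smul, Matrix.smul_mul,
    smul_smul, h]
  module

set_option maxHeartbeats 1000000 in
lemma homological : SHmatJ * SHmatPhi1 - SHmatPhi1 * SHmatJ = SHmatN - SHmatE := by
  rw [E_eq]
  ext i j
  fin_cases i <;> fin_cases j <;>
    simp [SHmatJ, SHmatPhi1, SHmatN, Matrix.mul_apply, Fin.sum_univ_four,
      Matrix.vecHead, Matrix.vecTail] <;> ring_nf <;> simp [Complex.I_sq] <;> ring_nf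

/-- **The μ-linear part of the normal form transformation.**
JΦ₁ − Φ₁J = N − E; equivalently, for all μ, the near-identity change of
variables I + μΦ₁ conjugates J + μE into J + μN up to terms of order μ². -/
theorem normal_form_linear_homological_equation :
    SHmatJ * SHmatPhi1 - SHmatPhi1 * SHmatJ = SHmatN - SHmatE ∧
    ∀ μ : ℂ,
      (SHmatJ + μ • SHmatE) * (1 + μ • SHmatPhi1)
          - (1 + μ • SHmatPhi1) * (SHmatJ + μ • SHmatN)
        = (μ ^ 2) • (SHmatE * SHmatPhi1 - SHmatPhi1 * SHmatN) := by
  exact ⟨homological, fun μ => key_abstract _ _ _ _ μ homological⟩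
end

section
/- There exists a C² function r: (−∞,0] → (0,∞) with r(0) = 1/2, satisfying r'(y) = √(r(y)² + r(y)⁴/2) for all y ≤ 0 and r(y) → 0 as y → −∞. Moreover, for every φ ∈ ℝ, the pair (a,b) := (e^{iφ}r, e^{iφ}r') solves a' = b, b' = a + a|a|² on (−∞,0], satisfies (a,b)(0) = (e^{iφ}/2, e^{iφ}·3/(4√2)), tends to (0,0) as y → −∞, and along this solution Im(a·conj(b)) = 0 and |b|² − |a|² − (1/2)|a|⁴ = 0 identically. -/
open Filter Set

theorem GLaux1 (c u : ℝ) (hc : c^2 = 2) (hden : 0 < 1 - u^2) :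
    (2*c*u/(1-u^2))^2 + (2*c*u/(1-u^2))^4/2 = (2*c*u*(1+u^2)/(1-u^2)^2)^2 := by
  have hd : (1 - u^2) ≠ 0 := ne_of_gt hden
  field_simp
  linear_combination (4*u^2*(1-u^2)^2 + 8*u^4*c^2 + 4*u^2*(1+u^2)^2
    + c^2*(8*u^4 - 96*u^6 + 240*u^8 - 320*u^10 + 240*u^12 - 96*u^14 + 16*u^16)
    - 8*u^2 - 8*u^6
    - c^2*(14*u^4 - 96*u^6 + 240*u^8 - 320*u^10 + 240*u^12 - 96*u^14 + 16*u^16)) * hc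

theorem GLaux2 (c u : ℝ) (hc : c^2 = 2) (hden : 0 < 1 - u^2) :
    2*c*u/(1-u^2) + (2*c*u/(1-u^2))^3 =
    ((2*c*u*(1+u^2) + 2*c*u*(2*u*u))*(1-u^2)^2 - 2*c*u*(1+u^2)*(2*(1-u^2)*(-(2*u*u))))/((1-u^2)^2)^2 := by
  have hd : (1 - u^2) ≠ 0 := ne_of_gt hden
  field_simp
  linear_combination (8*c*u^3*(1-u^2)^2 + c*(-24*u^5 + 72*u^7 - 80*u^9 + 40*u^11 - 8*u^13)
    - c*(4*u^3 - 40*u^5 + 80*u^7 - 80*u^9 + 40*u^11 - 8*u^13)) * hc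

noncomputable def GLkk : ℝ := 3 - 2 * Real.sqrt 2

noncomputable def GLuu (y : ℝ) : ℝ := GLkk * Real.exp y

noncomputable def GLrr (y : ℝ) : ℝ := 2 * Real.sqrt 2 * GLuu y / (1 - (GLuu y) ^ 2)

noncomputable def GLss (y : ℝ) : ℝ :=
  2 * Real.sqrt 2 * GLuu y * (1 + (GLuu y) ^ 2) / (1 - (GLuu y) ^ 2) ^ 2

lemma GL_sqrt2_sq : Real.sqrt 2 ^ 2 = 2 := Real.sq_sqrt (by norm_num)

lemma GL_sqrt2_pos : 0 < Real.sqrt 2 := Real.sqrt_pos.2 (by norm_num)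

lemma GLkk_pos : 0 < GLkk := by
  have h := GL_sqrt2_sq
  have h2 := GL_sqrt2_pos
  unfold GLkk; nlinarith

lemma GLkk_lt_one : GLkk < 1 := by
  have h := GL_sqrt2_sq
  have h2 := GL_sqrt2_pos
  unfold GLkk; nlinarith

lemma GLuu_pos (y : ℝ) : 0 < GLuu y := mul_pos GLkk_pos (Real.exp_pos y)

lemma GLuu_lt_one {y : ℝ} (hy : y ≤ 0) : GLuu y < 1 := by
  have h1 : Real.exp y ≤ 1 := Real.exp_le_one_iff.2 hy
  have := GLkk_pos
  calc GLuu y = GLkk * Real.exp y := rfl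
    _ ≤ GLkk * 1 := by nlinarith
    _ < 1 := by simpa using GLkk_lt_one

lemma GLden_pos {y : ℝ} (hy : y ≤ 0) : 0 < 1 - (GLuu y) ^ 2 := by
  have h1 := GLuu_pos y
  have h2 := GLuu_lt_one hy
  nlinarith

lemma GLrr_pos {y : ℝ} (hy : y ≤ 0) : 0 < GLrr y := by
  have := GLden_pos hy
  have := GLuu_pos y
  have := GL_sqrt2_pos
  unfold GLrr
  positivity

lemma GLss_pos {y : ℝ} (hy : y ≤ 0) : 0 < GLss y := by
  have := GLden_pos hy
  have h1 := GLuu_pos y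
  have := GL_sqrt2_pos
  unfold GLss
  positivity

lemma GLuu_hasDeriv (y : ℝ) : HasDerivAt GLuu (GLuu y) y := by
  exact (Real.hasDerivAt_exp y).const_mul GLkk

lemma GLrr_hasDeriv {y : ℝ} (hy : y ≤ 0) : HasDerivAt GLrr (GLss y) y := by
  have hu := GLuu_hasDeriv y
  have hden := GLden_pos hy
  have hN : HasDerivAt (fun y => 2 * Real.sqrt 2 * GLuu y) (2 * Real.sqrt 2 * GLuu y) y :=
    hu.const_mul _
  have hD : HasDerivAt (fun y => 1 - (GLuu y) ^ 2) (-(2 * GLuu y * GLuu y)) y := by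
    exact ((hasDerivAt_const y (1:ℝ)).sub (hu.pow 2)).congr_deriv (by norm_num <;> ring)
  have := hN.div hD (ne_of_gt hden)
  refine this.congr_deriv ?_
  unfold GLss
  field_simp
  ring

lemma GLsqrt_eq {y : ℝ} (hy : y ≤ 0) :
    Real.sqrt ((GLrr y) ^ 2 + (GLrr y) ^ 4 / 2) = GLss y := by
  have hden := GLden_pos hy
  have hc := GL_sqrt2_sq
  have hss := (GLss_pos hy).le
  have key : (GLrr y) ^ 2 + (GLrr y) ^ 4 / 2 = (GLss y) ^ 2 := by
    unfold GLrr GLss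
    exact GLaux1 _ _ GL_sqrt2_sq hden
  rw [key, Real.sqrt_sq hss]

lemma GLss_hasDeriv {y : ℝ} (hy : y ≤ 0) : HasDerivAt GLss (GLrr y + (GLrr y) ^ 3) y := by
  have hu := GLuu_hasDeriv y
  have hden := GLden_pos hy
  have hc := GL_sqrt2_sq
  have hN : HasDerivAt (fun y => 2 * Real.sqrt 2 * GLuu y * (1 + (GLuu y) ^ 2))
      (2 * Real.sqrt 2 * GLuu y * (1 + (GLuu y) ^ 2)
        + 2 * Real.sqrt 2 * GLuu y * (2 * GLuu y * GLuu y)) y := by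
    have h1 : HasDerivAt (fun y => 2 * Real.sqrt 2 * GLuu y) (2 * Real.sqrt 2 * GLuu y) y :=
      hu.const_mul _
    have h2 : HasDerivAt (fun y => 1 + (GLuu y) ^ 2) (2 * GLuu y * GLuu y) y := by
      exact ((hasDerivAt_const y (1:ℝ)).add (hu.pow 2)).congr_deriv (by norm_num <;> ring)
    exact h1.mul h2
  have hD : HasDerivAt (fun y => (1 - (GLuu y) ^ 2) ^ 2)
      (2 * (1 - (GLuu y) ^ 2) * (-(2 * GLuu y * GLuu y))) y := by
    have h2 : HasDerivAt (fun y => 1 - (GLuu y) ^ 2) (-(2 * GLuu y * GLuu y)) y := by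
      exact ((hasDerivAt_const y (1:ℝ)).sub (hu.pow 2)).congr_deriv (by norm_num <;> ring)
    exact (h2.pow 2).congr_deriv (by norm_num <;> ring)
  have := hN.div hD (by positivity)
  refine this.congr_deriv ?_
  unfold GLrr
  exact (GLaux2 _ _ GL_sqrt2_sq hden).symm

lemma GLrr_tendsto : Tendsto GLrr atBot (nhds 0) := by
  have h1 : Tendsto GLuu atBot (nhds 0) := by
    have := (Real.tendsto_exp_atBot).const_mul GLkk
    rw [mul_zero] at this
    exact this
  have h2 : Tendsto (fun y => 2 * Real.sqrt 2 * GLuu y) atBot (nhds (2 * Real.sqrt 2 * 0)) :=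
    h1.const_mul _
  have h3 : Tendsto (fun y => 1 - (GLuu y) ^ 2) atBot (nhds (1 - 0 ^ 2)) :=
    tendsto_const_nhds.sub (h1.pow 2)
  have := h2.div h3 (by norm_num)
  have e : (2 * Real.sqrt 2 * 0 / (1 - 0 ^ 2) : ℝ) = 0 := by norm_num
  rw [e] at this
  exact this

lemma GLrr_zero : GLrr 0 = 1 / 2 := by
  have hc := GL_sqrt2_sq
  have h2 := GL_sqrt2_pos
  have hden := GLden_pos (le_refl 0)
  unfold GLrr at hden ⊢
  unfold GLuu GLkk at hden ⊢
  rw [Real.exp_zero] at hden ⊢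
  rw [div_eq_iff (ne_of_gt hden)]
  nlinarith

/-- **The unstable manifold of the origin for a' = b, b' = a + a|a|².**
There is a C² function r on (−∞,0] with r(0) = 1/2, r' = √(r² + r⁴/2),
r → 0 at −∞, and for each φ the pair (e^{iφ}r, e^{iφ}r') solves the σ = +1
Ginzburg–Landau system on (−∞,0], passes through (e^{iφ}/2, e^{iφ}·3/(4√2)) at
y = 0, tends to (0,0) at −∞, and on it M = 0 and H⁻ = 0 identically. -/
theorem unstable_manifold_of_origin :
    ∃ r : ℝ → ℝ,
      (∀ y ∈ Set.Iic (0 : ℝ), 0 < r y) ∧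
      r 0 = 1 / 2 ∧
      ContDiffOn ℝ 2 r (Set.Iic 0) ∧
      (∀ y ∈ Set.Iic (0 : ℝ),
        HasDerivWithinAt r (Real.sqrt ((r y) ^ 2 + (r y) ^ 4 / 2)) (Set.Iic 0) y) ∧
      Tendsto r atBot (nhds 0) ∧
      ∀ φ : ℝ,
        let a : ℝ → ℂ := fun y => Complex.exp (Complex.I * φ) * (r y : ℂ)
        let b : ℝ → ℂ := fun y =>
          Complex.exp (Complex.I * φ) * (Real.sqrt ((r y) ^ 2 + (r y) ^ 4 / 2) : ℂ)
        (∀ y ∈ Set.Iic (0 : ℝ),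
            HasDerivWithinAt a (b y) (Set.Iic 0) y ∧
            HasDerivWithinAt b (a y + a y * ((‖a y‖ : ℂ)) ^ 2) (Set.Iic 0) y) ∧
        a 0 = Complex.exp (Complex.I * φ) / 2 ∧
        b 0 = Complex.exp (Complex.I * φ) * 3 / (4 * (Real.sqrt 2 : ℂ)) ∧
        Tendsto a atBot (nhds 0) ∧
        Tendsto b atBot (nhds 0) ∧
        (∀ y ∈ Set.Iic (0 : ℝ), (a y * (starRingEnd ℂ) (b y)).im = 0) ∧
        (∀ y ∈ Set.Iic (0 : ℝ), ‖b y‖ ^ 2 - ‖a y‖ ^ 2 - (1 / 2) * ‖a y‖ ^ 4 = 0) := by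
  refine ⟨GLrr, fun y hy => GLrr_pos hy, GLrr_zero, ?_, ?_, GLrr_tendsto, ?_⟩
  · -- ContDiffOn
    intro y hy
    apply ContDiffAt.contDiffWithinAt
    have hcu : ContDiff ℝ 2 GLuu := by
      unfold GLuu; exact contDiff_const.mul Real.contDiff_exp
    apply ContDiffAt.div
    · exact (contDiff_const.mul hcu).contDiffAt
    · exact (contDiff_const.sub (hcu.pow 2)).contDiffAt
    · exact ne_of_gt (GLden_pos hy)
  · -- derivative of r
    intro y hy
    rw [GLsqrt_eq hy]
    exact (GLrr_hasDeriv hy).hasDerivWithinAt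
  · -- the complex statements
    intro φ a b
    have hE : Complex.exp (Complex.I * φ) ≠ 0 := Complex.exp_ne_zero _
    have hbs : ∀ y ∈ Set.Iic (0:ℝ),
        b y = Complex.exp (Complex.I * φ) * (GLss y : ℂ) := by
      intro y hy
      simp only [b, GLsqrt_eq hy]
    refine ⟨?_, ?_, ?_, ?_, ?_, ?_, ?_⟩
    · intro y hy
      constructor
      · have h1 : HasDerivAt (fun y => (GLrr y : ℂ)) (GLss y : ℂ) y :=
          (GLrr_hasDeriv hy).ofReal_comp
        rw [hbs y hy]
        exact (h1.const_mul (Complex.exp (Complex.I * φ))).hasDerivWithinAt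
      · have h1 : HasDerivAt (fun y => (GLss y : ℂ)) ((GLrr y + (GLrr y) ^ 3 : ℝ) : ℂ) y :=
          (GLss_hasDeriv hy).ofReal_comp
        have h2 : HasDerivWithinAt (fun y => Complex.exp (Complex.I * φ) * (GLss y : ℂ))
            (Complex.exp (Complex.I * φ) * ((GLrr y + (GLrr y) ^ 3 : ℝ) : ℂ)) (Set.Iic 0) y :=
          (h1.const_mul (Complex.exp (Complex.I * φ))).hasDerivWithinAt
        have h3 : HasDerivWithinAt b
            (Complex.exp (Complex.I * φ) * ((GLrr y + (GLrr y) ^ 3 : ℝ) : ℂ)) (Set.Iic 0) y :=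
          h2.congr hbs (hbs y hy)
        convert h3 using 1
        have hna : ‖a y‖ = GLrr y := by
          simp only [a, norm_mul, Complex.norm_real, Real.norm_eq_abs]
          rw [abs_of_pos (GLrr_pos hy)]
          simp [Complex.norm_exp]
        rw [hna]
        simp only [a]
        push_cast
        ring
    · simp only [a, GLrr_zero]
      push_cast
      ring
    · have h0 : Real.sqrt ((GLrr 0) ^ 2 + (GLrr 0) ^ 4 / 2) = 3 / (4 * Real.sqrt 2) := by
        rw [GLrr_zero]
        have : ((1:ℝ)/2) ^ 2 + ((1:ℝ)/2) ^ 4 / 2 = (3 / (4 * Real.sqrt 2)) ^ 2 := by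
          have hc := GL_sqrt2_sq
          have h2 := GL_sqrt2_pos
          field_simp
          nlinarith
        rw [this, Real.sqrt_sq (by positivity)]
      simp only [b, h0]
      have h2 := GL_sqrt2_pos
      push_cast
      field_simp
    · have := GLrr_tendsto
      have h1 : Tendsto (fun y => (GLrr y : ℂ)) atBot (nhds ((0:ℝ):ℂ)) :=
        (Complex.continuous_ofReal.tendsto 0).comp this
      have h2 := h1.const_mul (Complex.exp (Complex.I * φ))
      simpa [a] using h2
    · have hr := GLrr_tendsto
      have h1 : Tendsto (fun y => (GLrr y) ^ 2 + (GLrr y) ^ 4 / 2) atBot (nhds 0) := by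
        have := (hr.pow 2).add ((hr.pow 4).div_const 2)
        simpa using this
      have h2 : Tendsto (fun y => Real.sqrt ((GLrr y) ^ 2 + (GLrr y) ^ 4 / 2)) atBot (nhds 0) := by
        have := (Real.continuous_sqrt.tendsto 0).comp h1
        rw [Real.sqrt_zero] at this
        exact this
      have h3 : Tendsto (fun y => (Real.sqrt ((GLrr y) ^ 2 + (GLrr y) ^ 4 / 2) : ℂ)) atBot
          (nhds ((0:ℝ):ℂ)) := (Complex.continuous_ofReal.tendsto 0).comp h2
      have h4 := h3.const_mul (Complex.exp (Complex.I * φ))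
      simpa [b] using h4
    · intro y hy
      rw [hbs y hy]
      have hconj : (starRingEnd ℂ) (Complex.exp (Complex.I * φ) * (GLss y : ℂ))
          = (starRingEnd ℂ) (Complex.exp (Complex.I * φ)) * (GLss y : ℂ) := by
        simp [map_mul, Complex.conj_ofReal]
      rw [hconj]
      have : a y * ((starRingEnd ℂ) (Complex.exp (Complex.I * φ)) * (GLss y : ℂ))
          = (Complex.exp (Complex.I * φ) * (starRingEnd ℂ) (Complex.exp (Complex.I * φ)))
            * ((GLrr y : ℂ) * (GLss y : ℂ)) := by
        simp only [a]; ring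
      rw [this, Complex.mul_conj]
      simp
    · intro y hy
      have hna : ‖a y‖ = GLrr y := by
        simp only [a, norm_mul, Complex.norm_real, Real.norm_eq_abs]
        rw [abs_of_pos (GLrr_pos hy)]
        simp [Complex.norm_exp]
      have hnb : ‖b y‖ ^ 2 = (GLrr y) ^ 2 + (GLrr y) ^ 4 / 2 := by
        have hs : 0 ≤ (GLrr y) ^ 2 + (GLrr y) ^ 4 / 2 := by positivity
        have : ‖b y‖ = Real.sqrt ((GLrr y) ^ 2 + (GLrr y) ^ 4 / 2) := by
          simp only [b, norm_mul, Complex.norm_real, Real.norm_eq_abs]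
          rw [abs_of_nonneg (Real.sqrt_nonneg _)]
          simp [Complex.norm_exp]
        rw [this, Real.sq_sqrt hs]
      rw [hnb, hna]
      ring
end

section
/- For each κ ∈ ℝ with κ² < 1/3, set β := √(1−3κ²). Then the pair a_d(y;κ) = (√2·κ + iβ·tanh(β y/√2)) e^{iκy} and b_d(y;κ) := ∂_y a_d(y;κ) solves the system a' = b, b' = −a + a|a|² on all of ℝ. -/
open Filter Set

lemma my_hasDerivAt_tanh (x : ℝ) : HasDerivAt Real.tanh (1 - Real.tanh x ^ 2) x := by
  have h := (Real.hasDerivAt_sinh x).div (Real.hasDerivAt_cosh x) (Real.cosh_pos x).ne'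
  have hfun : Real.tanh = fun x => Real.sinh x / Real.cosh x :=
    funext fun x => Real.tanh_eq_sinh_div_cosh x
  have key : 1 - Real.tanh x ^ 2
      = (Real.cosh x * Real.cosh x - Real.sinh x * Real.sinh x) / Real.cosh x ^ 2 := by
    rw [Real.tanh_eq_sinh_div_cosh]
    have h1 : Real.cosh x ≠ 0 := (Real.cosh_pos x).ne'
    field_simp
  rw [key, hfun]
  exact h

/-- **Defect solutions of the real Ginzburg–Landau system with σ = −1.**
For κ² < 1/3 and β = √(1−3κ²), the pair a_d(y) = (√2 κ + iβ tanh(βy/√2)) e^{iκy},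
b_d := a_d' solves a' = b, b' = −a + a|a|² on all of ℝ. -/
theorem ginzburg_landau_defect_solutions (κ : ℝ) (hκ : κ ^ 2 < 1 / 3) :
    let β : ℝ := Real.sqrt (1 - 3 * κ ^ 2)
    let a : ℝ → ℂ := fun y =>
      ((Real.sqrt 2 * κ : ℝ) + Complex.I * (β : ℂ) * (Real.tanh (β * y / Real.sqrt 2) : ℂ)) *
        Complex.exp (Complex.I * κ * y)
    let b : ℝ → ℂ := deriv a
    ∀ y : ℝ, HasDerivAt a (b y) y ∧
      HasDerivAt b (-(a y) + a y * ((‖a y‖ : ℂ)) ^ 2) y := by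
  intro β a b
  have h2 : (Real.sqrt 2 : ℝ) ≠ 0 := by positivity
  have hβ2 : (β : ℝ) ^ 2 = 1 - 3 * κ ^ 2 := Real.sq_sqrt (by linarith)
  set c : ℝ := β / Real.sqrt 2 with hc
  have hinner : ∀ y : ℝ, HasDerivAt (fun y : ℝ => β * y / Real.sqrt 2) c y := by
    intro y
    simpa [hc, mul_div_assoc] using ((hasDerivAt_id y).const_mul β).div_const (Real.sqrt 2)
  have htanh : ∀ y : ℝ, HasDerivAt (fun y : ℝ => ((Real.tanh (β * y / Real.sqrt 2) : ℝ) : ℂ))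
      (((1 - Real.tanh (β * y / Real.sqrt 2) ^ 2) * c : ℝ) : ℂ) y := fun y =>
    ((my_hasDerivAt_tanh _).comp y (hinner y)).ofReal_comp
  have hexp : ∀ y : ℝ, HasDerivAt (fun y : ℝ => Complex.exp (Complex.I * κ * y))
      (Complex.I * κ * Complex.exp (Complex.I * κ * y)) y := by
    intro y
    have hlin : HasDerivAt (fun y : ℝ => Complex.I * κ * (y : ℂ)) (Complex.I * κ) y := by
      simpa using (Complex.ofRealCLM.hasDerivAt (x := y)).const_mul (Complex.I * (κ : ℂ))
    simpa [mul_comm, Function.comp_def] using (Complex.hasDerivAt_exp _).comp y hlin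
  set F : ℝ → ℂ := fun y =>
    (Complex.I * β * (((1 - Real.tanh (β * y / Real.sqrt 2) ^ 2) * c : ℝ) : ℂ)
      + Complex.I * κ * ((Real.sqrt 2 * κ : ℝ) + Complex.I * (β : ℂ) *
        (Real.tanh (β * y / Real.sqrt 2) : ℂ))) * Complex.exp (Complex.I * κ * y) with hF
  have ha : ∀ y : ℝ, HasDerivAt a (F y) y := by
    intro y
    have h1 : HasDerivAt (fun y : ℝ => ((Real.sqrt 2 * κ : ℝ) : ℂ)
        + Complex.I * (β : ℂ) * (Real.tanh (β * y / Real.sqrt 2) : ℂ))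
        (Complex.I * β * (((1 - Real.tanh (β * y / Real.sqrt 2) ^ 2) * c : ℝ) : ℂ)) y :=
      (((htanh y).const_mul (Complex.I * (β : ℂ))).const_add _)
    exact (h1.mul (hexp y)).congr_deriv (by rw [hF]; ring)
  have hb : b = F := funext fun y => (ha y).deriv
  intro y
  refine ⟨by rw [hb]; exact ha y, ?_⟩
  rw [hb]
  set t : ℝ := Real.tanh (β * y / Real.sqrt 2) with ht
  have hF1 : HasDerivAt (fun y : ℝ =>
      Complex.I * β * (((1 - Real.tanh (β * y / Real.sqrt 2) ^ 2) * c : ℝ) : ℂ)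
      + Complex.I * κ * (((Real.sqrt 2 * κ : ℝ) : ℂ) + Complex.I * (β : ℂ) *
        (Real.tanh (β * y / Real.sqrt 2) : ℂ)))
      (Complex.I * β * (((-2 * t * ((1 - t ^ 2) * c)) * c : ℝ) : ℂ)
      + Complex.I * κ * (Complex.I * (β : ℂ) * (((1 - t ^ 2) * c : ℝ) : ℂ))) y := by
    have hsq : HasDerivAt (fun y : ℝ => ((1 - Real.tanh (β * y / Real.sqrt 2) ^ 2) * c : ℝ))
        ((-2 * t * ((1 - t ^ 2) * c)) * c) y := by
      have htt : HasDerivAt (fun y : ℝ => Real.tanh (β * y / Real.sqrt 2)) ((1 - t ^ 2) * c) y :=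
        (my_hasDerivAt_tanh _).comp y (hinner y)
      exact (((htt.pow 2).const_sub 1).mul_const c).congr_deriv (by ring)
    exact (hsq.ofReal_comp.const_mul (Complex.I * (β : ℂ))).add
      (((((htanh y).const_mul (Complex.I * (β : ℂ))).const_add
        (((Real.sqrt 2 * κ : ℝ) : ℂ))).const_mul (Complex.I * (κ : ℂ))))
  have hFderiv := hF1.mul (hexp y)
  have hFf : F = fun y =>
      (Complex.I * β * (((1 - Real.tanh (β * y / Real.sqrt 2) ^ 2) * c : ℝ) : ℂ)
      + Complex.I * κ * (((Real.sqrt 2 * κ : ℝ) : ℂ) + Complex.I * (β : ℂ) *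
        (Real.tanh (β * y / Real.sqrt 2) : ℂ))) * Complex.exp (Complex.I * κ * y) := by
    rw [hF]
  rw [hFf]
  refine hFderiv.congr_deriv ?_
  -- the algebraic identity
  have haval : a y = (((Real.sqrt 2 * κ : ℝ) : ℂ) + Complex.I * (β : ℂ) * (t : ℂ)) *
      Complex.exp (Complex.I * κ * y) := by simp only [a, ht]
  have hnorm : (‖a y‖ : ℝ) ^ 2 = (Real.sqrt 2 * κ) ^ 2 + β ^ 2 * t ^ 2 := by
    rw [haval, norm_mul, Complex.norm_exp]
    have hre : (Complex.I * κ * y).re = 0 := by simp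
    rw [hre, Real.exp_zero, mul_one, Complex.sq_norm]
    simp [Complex.normSq_apply]
    ring
  have hnormC : ((‖a y‖ : ℂ)) ^ 2 = (((Real.sqrt 2 * κ) ^ 2 + β ^ 2 * t ^ 2 : ℝ) : ℂ) := by
    rw [← Complex.ofReal_pow, hnorm]
  rw [haval, hnormC, ← ht]
  set E := Complex.exp (Complex.I * κ * y) with hE
  push_cast
  have hI : Complex.I ^ 2 = -1 := Complex.I_sq
  have hcs : ((c : ℝ) : ℂ) * ((Real.sqrt 2 : ℝ) : ℂ) = ((β : ℝ) : ℂ) := by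
    rw [← Complex.ofReal_mul]
    norm_cast
    rw [hc]
    field_simp
  have h22 : ((Real.sqrt 2 : ℝ) : ℂ) * ((Real.sqrt 2 : ℝ) : ℂ) = 2 := by
    rw [← Complex.ofReal_mul, Real.mul_self_sqrt (by norm_num : (0:ℝ) ≤ 2)]
    norm_num
  have hc2 : ((c : ℝ) : ℂ) * ((c : ℝ) : ℂ) = ((β : ℝ) : ℂ) ^ 2 / 2 := by
    have : (c : ℝ) * c = β ^ 2 / 2 := by
      rw [hc, div_mul_div_comm, Real.mul_self_sqrt (by norm_num : (0:ℝ) ≤ 2), ← sq]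
    rw [← Complex.ofReal_mul, this]
    push_cast
    ring
  have hb2C : ((β : ℝ) : ℂ) ^ 2 = 1 - 3 * ((κ : ℝ) : ℂ) ^ 2 := by
    rw [← Complex.ofReal_pow, hβ2]
    push_cast
    ring
  linear_combination
      (Complex.I * (β:ℂ) * (t:ℂ) * (κ:ℂ)^2 * E + ((Real.sqrt 2:ℝ):ℂ) * (κ:ℂ)^3 * E
        + 2 * (β:ℂ) * (c:ℂ) * (κ:ℂ) * E - 2 * (β:ℂ) * (t:ℂ)^2 * (c:ℂ) * (κ:ℂ) * E) * hI
    + (-(Complex.I * (β:ℂ) * (t:ℂ) * (κ:ℂ)^2 * E) - ((Real.sqrt 2:ℝ):ℂ) * (κ:ℂ)^3 * E) * h22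
    + (2 * Complex.I * (β:ℂ) * (t:ℂ)^3 * E - 2 * Complex.I * (β:ℂ) * (t:ℂ) * E
        + 2 * (t:ℂ)^2 * (κ:ℂ) * ((Real.sqrt 2:ℝ):ℂ) * E
        - 2 * (κ:ℂ) * ((Real.sqrt 2:ℝ):ℂ) * E) * hc2
    + (2 * (c:ℂ) * (κ:ℂ) * E - 2 * (t:ℂ)^2 * (c:ℂ) * (κ:ℂ) * E) * hcs
    + (-((t:ℂ)^2 * (κ:ℂ) * ((Real.sqrt 2:ℝ):ℂ) * E) - Complex.I * (β:ℂ) * (t:ℂ) * E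
        - (κ:ℂ) * ((Real.sqrt 2:ℝ):ℂ) * E) * hb2C
    + ((t:ℂ)^2 * (κ:ℂ) * ((Real.sqrt 2:ℝ):ℂ) * E) * hb2C
end

section
/- Identify ℂ² with ℝ⁴ via (a,b) ↦ (Re a, Im a, Re b, Im b), and define the smooth functions M, H⁺, H⁻: ℝ⁴ → ℝ by M(a,b) = Im(a·conj(b)) and H^±(a,b) = |b|² ± |a|² − (1/2)|a|⁴. Then for every φ ∈ ℝ, at the point p_φ = (e^{iφ}/2, e^{iφ}·3/(4√2)) ∈ ℂ² ≅ ℝ⁴, the gradients ∇M(p_φ) and ∇H⁻(p_φ) are linearly independent, and the gradients ∇M(p_φ) and ∇H⁺(p_φ) are linearly independent. -/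
open Filter Set

lemma normsq_aux (x y : ℝ) : ‖(x:ℂ) + y*Complex.I‖^2 = x^2 + y^2 := by
  simp [Complex.sq_norm, Complex.normSq_apply]; ring

lemma hasDerivAt_aux (ε A B x : ℝ) :
    HasDerivAt (fun t : ℝ => A + ε*(t^2+B) - 1/2*(t^2+B)^2) (ε*(2*x) - (2*x)*(x^2+B)) x := by
  have h1 : HasDerivAt (fun t : ℝ => t^2 + B) (2*x) x := by
    simpa using (hasDerivAt_pow 2 x).add_const B
  have h2 := (h1.const_mul ε).const_add A
  have h3 : HasDerivAt (fun t : ℝ => 1/2*(t^2+B)^2) (1/2*(((2:ℕ):ℝ)*(x^2+B)^(2-1)*(2*x))) x :=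
    (h1.pow 2).const_mul (1/2 : ℝ)
  refine (h2.sub h3).congr_deriv ?_
  push_cast; ring

lemma gradM_aux (p : Fin 4 → ℝ) (j : Fin 4) :
    deriv (fun t => Function.update p j t 1 * Function.update p j t 2
      - Function.update p j t 0 * Function.update p j t 3) (p j) =
    ![-(p 3), p 2, p 1, -(p 0)] j := by
  fin_cases j <;> simp only [Function.update_apply] <;> norm_num <;>
    simp [deriv_sub, deriv_mul_const, deriv_const_mul, mul_comm]

lemma gradH_aux (ε : ℝ) (p : Fin 4 → ℝ) (j : Fin 4) :
    deriv (fun t => (Function.update p j t 2)^2 + (Function.update p j t 3)^2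
      + ε*((Function.update p j t 0)^2 + (Function.update p j t 1)^2)
      - 1/2*((Function.update p j t 0)^2 + (Function.update p j t 1)^2)^2) (p j) =
    ![ε*(2*p 0) - 2*p 0*(p 0^2+p 1^2), ε*(2*p 1) - 2*p 1*(p 0^2+p 1^2), 2*p 2, 2*p 3] j := by
  fin_cases j
  · show deriv _ (p 0) = ε*(2*p 0) - 2*p 0*(p 0^2+p 1^2)
    have e : (fun t => (Function.update p 0 t 2)^2 + (Function.update p 0 t 3)^2
      + ε*((Function.update p 0 t 0)^2 + (Function.update p 0 t 1)^2)
      - 1/2*((Function.update p 0 t 0)^2 + (Function.update p 0 t 1)^2)^2) =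
        fun t : ℝ => (p 2^2 + p 3^2) + ε*(t^2 + p 1^2) - 1/2*(t^2 + p 1^2)^2 := by
      funext t; simp [Function.update_apply]
    rw [show ((⟨0, by norm_num⟩ : Fin 4)) = (0:Fin 4) from rfl] at *
    rw [e, (hasDerivAt_aux ε _ _ _).deriv]
  · show deriv _ (p 1) = ε*(2*p 1) - 2*p 1*(p 0^2+p 1^2)
    have e : (fun t => (Function.update p 1 t 2)^2 + (Function.update p 1 t 3)^2
      + ε*((Function.update p 1 t 0)^2 + (Function.update p 1 t 1)^2)
      - 1/2*((Function.update p 1 t 0)^2 + (Function.update p 1 t 1)^2)^2) =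
        fun t : ℝ => (p 2^2 + p 3^2) + ε*(t^2 + p 0^2) - 1/2*(t^2 + p 0^2)^2 := by
      funext t; simp [Function.update_apply]; ring
    rw [show ((⟨1, by norm_num⟩ : Fin 4)) = (1:Fin 4) from rfl] at *
    rw [e, (hasDerivAt_aux ε _ _ _).deriv]; ring
  · show deriv _ (p 2) = 2*p 2
    have e : (fun t => (Function.update p 2 t 2)^2 + (Function.update p 2 t 3)^2
      + ε*((Function.update p 2 t 0)^2 + (Function.update p 2 t 1)^2)
      - 1/2*((Function.update p 2 t 0)^2 + (Function.update p 2 t 1)^2)^2) =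
        fun t : ℝ => t^2 + (p 3^2 + ε*(p 0^2 + p 1^2) - 1/2*(p 0^2 + p 1^2)^2) := by
      funext t; simp [Function.update_apply]; ring
    rw [show ((⟨2, by norm_num⟩ : Fin 4)) = (2:Fin 4) from rfl] at *
    rw [e, ((hasDerivAt_pow 2 (p 2)).add_const _).deriv]; push_cast; ring
  · show deriv _ (p 3) = 2*p 3
    have e : (fun t => (Function.update p 3 t 2)^2 + (Function.update p 3 t 3)^2
      + ε*((Function.update p 3 t 0)^2 + (Function.update p 3 t 1)^2)
      - 1/2*((Function.update p 3 t 0)^2 + (Function.update p 3 t 1)^2)^2) =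
        fun t : ℝ => t^2 + (p 2^2 + ε*(p 0^2 + p 1^2) - 1/2*(p 0^2 + p 1^2)^2) := by
      funext t; simp [Function.update_apply]; ring
    rw [show ((⟨3, by norm_num⟩ : Fin 4)) = (3:Fin 4) from rfl] at *
    rw [e, ((hasDerivAt_pow 2 (p 3)).add_const _).deriv]; push_cast; ring

/-- **Linear independence of the gradients of the conserved quantities.**
Identifying ℂ² ≅ ℝ⁴ via (a,b) ↦ (Re a, Im a, Re b, Im b), with
M(a,b) = Im(a·conj b) and H^±(a,b) = |b|² ± |a|² − (1/2)|a|⁴, at each point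
p_φ = (e^{iφ}/2, e^{iφ}·3/(4√2)) the gradients ∇M and ∇H⁻ are linearly
independent, and likewise ∇M and ∇H⁺. -/
theorem gradients_linearly_independent (φ : ℝ) :
    let toC : (Fin 4 → ℝ) → ℂ × ℂ := fun v =>
      ((v 0 : ℂ) + (v 1 : ℂ) * Complex.I, (v 2 : ℂ) + (v 3 : ℂ) * Complex.I)
    let Mf : (Fin 4 → ℝ) → ℝ := fun v => ((toC v).1 * (starRingEnd ℂ) (toC v).2).im
    let Hp : (Fin 4 → ℝ) → ℝ := fun v =>
      ‖(toC v).2‖ ^ 2 + ‖(toC v).1‖ ^ 2 - (1 / 2) * ‖(toC v).1‖ ^ 4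
    let Hm : (Fin 4 → ℝ) → ℝ := fun v =>
      ‖(toC v).2‖ ^ 2 - ‖(toC v).1‖ ^ 2 - (1 / 2) * ‖(toC v).1‖ ^ 4
    let grad : ((Fin 4 → ℝ) → ℝ) → (Fin 4 → ℝ) → (Fin 4 → ℝ) := fun f p j =>
      deriv (fun t => f (Function.update p j t)) (p j)
    let pφ : Fin 4 → ℝ :=
      ![Real.cos φ / 2, Real.sin φ / 2,
        3 * Real.cos φ / (4 * Real.sqrt 2), 3 * Real.sin φ / (4 * Real.sqrt 2)]
    LinearIndependent ℝ ![grad Mf pφ, grad Hm pφ] ∧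
    LinearIndependent ℝ ![grad Mf pφ, grad Hp pφ] := by
  intro toC Mf Hp Hm grad pφ
  have hMf : Mf = fun v => v 1 * v 2 - v 0 * v 3 := by
    funext v
    simp only [Mf, toC, Complex.mul_im, Complex.add_re, Complex.add_im, Complex.ofReal_re,
      Complex.ofReal_im, Complex.mul_re, Complex.I_re, Complex.I_im, map_add, map_mul,
      Complex.conj_I, Complex.conj_ofReal, Complex.neg_im, Complex.neg_re, Complex.mul_im]
    ring
  have h4 : ∀ z : ℂ, ‖z‖^4 = (‖z‖^2)^2 := fun z => by ring
  have hHp : Hp = fun v => (v 2^2 + v 3^2) + (1:ℝ)*(v 0^2 + v 1^2) - 1/2*(v 0^2+v 1^2)^2 := by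
    funext v
    simp only [Hp, toC, h4, normsq_aux]
    ring
  have hHm : Hm = fun v => (v 2^2 + v 3^2) + (-1:ℝ)*(v 0^2 + v 1^2) - 1/2*(v 0^2+v 1^2)^2 := by
    funext v
    simp only [Hm, toC, h4, normsq_aux]
    ring
  have hgM : grad Mf pφ = ![-(pφ 3), pφ 2, pφ 1, -(pφ 0)] := by
    funext j; simp only [grad, hMf]; exact gradM_aux pφ j
  have hgHp : grad Hp pφ = ![1*(2*pφ 0) - 2*pφ 0*(pφ 0^2+pφ 1^2),
      1*(2*pφ 1) - 2*pφ 1*(pφ 0^2+pφ 1^2), 2*pφ 2, 2*pφ 3] := by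
    funext j; simp only [grad, hHp]; exact gradH_aux 1 pφ j
  have hgHm : grad Hm pφ = ![(-1)*(2*pφ 0) - 2*pφ 0*(pφ 0^2+pφ 1^2),
      (-1)*(2*pφ 1) - 2*pφ 1*(pφ 0^2+pφ 1^2), 2*pφ 2, 2*pφ 3] := by
    funext j; simp only [grad, hHm]; exact gradH_aux (-1) pφ j
  have hp0 : pφ 0 = Real.cos φ / 2 := rfl
  have hp1 : pφ 1 = Real.sin φ / 2 := rfl
  have hp2 : pφ 2 = 3 * Real.cos φ / (4 * Real.sqrt 2) := rfl
  have hp3 : pφ 3 = 3 * Real.sin φ / (4 * Real.sqrt 2) := rfl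
  have hsq2 : Real.sqrt 2 ≠ 0 := by positivity
  have hpyth := Real.sin_sq_add_cos_sq φ
  have h2 : Real.sqrt 2 * Real.sqrt 2 = 2 := Real.mul_self_sqrt (by norm_num)
  constructor
  · rw [hgM, hgHm, LinearIndependent.pair_iff]
    intro s t h
    have h0 := congrFun h 0
    have h1 := congrFun h 1
    simp only [Pi.add_apply, Pi.smul_apply, Pi.zero_apply, smul_eq_mul,
      Matrix.cons_val_zero, Matrix.cons_val_one, Matrix.head_cons, hp0, hp1, hp2, hp3] at h0 h1
    field_simp at h0 h1
    constructor
    · linear_combination (-(Real.sin φ)/12) * h0 + (Real.cos φ/12) * h1 - s * hpyth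
    · linear_combination (-(Real.sqrt 2)*Real.cos φ/40) * h0 + (-(Real.sqrt 2)*Real.sin φ/40) * h1
        - (t*(Real.sin φ^2+Real.cos φ^2)/2) * h2 - t * hpyth
        - (t*Real.sqrt 2^2/10*(Real.sin φ^2+Real.cos φ^2)) * hpyth
  · rw [hgM, hgHp, LinearIndependent.pair_iff]
    intro s t h
    have h0 := congrFun h 0
    have h1 := congrFun h 1
    simp only [Pi.add_apply, Pi.smul_apply, Pi.zero_apply, smul_eq_mul,
      Matrix.cons_val_zero, Matrix.cons_val_one, Matrix.head_cons, hp0, hp1, hp2, hp3] at h0 h1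
    field_simp at h0 h1
    constructor
    · linear_combination (-(Real.sin φ)/12) * h0 + (Real.cos φ/12) * h1 - s * hpyth
    · linear_combination ((Real.sqrt 2)*Real.cos φ/24) * h0 + ((Real.sqrt 2)*Real.sin φ/24) * h1
        - (t*(Real.sin φ^2+Real.cos φ^2)/2) * h2 - t * hpyth
        + (t*Real.sqrt 2^2/6*(Real.sin φ^2+Real.cos φ^2)) * hpyth
end

section
/- Let ε ∈ ℝ, let I ⊆ ℝ be an interval, and let (a,b): I → ℂ² be differentiable satisfying the truncated normal-form system a' = b + ε(−(i/4)a + (3i/8)a|a|²) and b' = −a + a|a|² + ε(−(i/4)b + (3i/8)b|a|² + (i/8)a(a·conj(b) − conj(a)·b)). Then the function y ↦ Im(a(y)·conj(b(y))) is constant on I. -/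
open Filter Set

private lemma norm_sq_eq_mul_conj (u : ℂ) :
    ((‖u‖ : ℂ)) ^ 2 = u * (starRingEnd ℂ) u := by
  rw [Complex.mul_conj]
  norm_cast
  rw [Complex.normSq_eq_norm_sq]

private lemma deriv_im_zero (ε : ℝ) (u v : ℂ) :
    ((v + (ε : ℂ) * (-(Complex.I / 4) * u + (3 * Complex.I / 8) * u * (u * (starRingEnd ℂ) u)))
        * (starRingEnd ℂ) v
      + u * (starRingEnd ℂ) (-u + u * (u * (starRingEnd ℂ) u)
        + (ε : ℂ) * (-(Complex.I / 4) * v + (3 * Complex.I / 8) * v * (u * (starRingEnd ℂ) u)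
          + (Complex.I / 8) * u * (u * (starRingEnd ℂ) v - (starRingEnd ℂ) u * v)))).im = 0 := by
  simp [Complex.ext_iff, Complex.add_im, Complex.mul_im, Complex.mul_re, Complex.sub_im,
    Complex.sub_re, Complex.div_im, Complex.div_re, Complex.normSq]
  ring

/-- **Exact conservation of M = Im(a·conj b) in the truncated normal form.**
If (a,b) : I → ℂ² is differentiable on an interval I and satisfies
a' = b + ε(−(i/4)a + (3i/8)a|a|²),
b' = −a + a|a|² + ε(−(i/4)b + (3i/8)b|a|² + (i/8)a(a·conj b − conj a·b)),
then y ↦ Im(a(y)·conj(b(y))) is constant on I. -/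
theorem truncated_normal_form_M_conserved
    (ε : ℝ) (I : Set ℝ) (hI : I.OrdConnected)
    (a b : ℝ → ℂ)
    (ha : ∀ y ∈ I, HasDerivAt a
      (b y + (ε : ℂ) * (-(Complex.I / 4) * a y
        + (3 * Complex.I / 8) * a y * ((‖a y‖ : ℂ)) ^ 2)) y)
    (hb : ∀ y ∈ I, HasDerivAt b
      (-(a y) + a y * ((‖a y‖ : ℂ)) ^ 2
        + (ε : ℂ) * (-(Complex.I / 4) * b y
          + (3 * Complex.I / 8) * b y * ((‖a y‖ : ℂ)) ^ 2
          + (Complex.I / 8) * a y *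
            (a y * (starRingEnd ℂ) (b y) - (starRingEnd ℂ) (a y) * b y))) y) :
    ∀ y ∈ I, ∀ z ∈ I,
      (a y * (starRingEnd ℂ) (b y)).im = (a z * (starRingEnd ℂ) (b z)).im := by
  set f : ℝ → ℝ := fun y => (a y * (starRingEnd ℂ) (b y)).im with hf
  have key : ∀ y ∈ I, HasDerivAt f 0 y := by
    intro y hy
    have h1 := ha y hy
    have h2 := (hb y hy).star
    have hprod := h1.mul h2
    have him := Complex.imCLM.hasFDerivAt.comp_hasDerivAt y hprod
    have heq : Complex.imCLM
        ((b y + (ε : ℂ) * (-(Complex.I / 4) * a y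
          + (3 * Complex.I / 8) * a y * ((‖a y‖ : ℂ)) ^ 2)) * star (b y)
        + a y * star (-(a y) + a y * ((‖a y‖ : ℂ)) ^ 2
          + (ε : ℂ) * (-(Complex.I / 4) * b y
            + (3 * Complex.I / 8) * b y * ((‖a y‖ : ℂ)) ^ 2
            + (Complex.I / 8) * a y *
              (a y * (starRingEnd ℂ) (b y) - (starRingEnd ℂ) (a y) * b y)))) = 0 := by
      simp only [Complex.imCLM_apply, Complex.star_def, norm_sq_eq_mul_conj]
      exact deriv_im_zero ε (a y) (b y)
    rw [heq] at him
    exact him.congr_deriv rfl |>.congr_of_eventuallyEq (by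
      filter_upwards with t
      simp [hf, Complex.star_def])
  have main : ∀ y ∈ I, ∀ z ∈ I, y ≤ z → f y = f z := by
    intro y hy z hz hyz
    have hsub : Icc y z ⊆ I := hI.out hy hz
    have hcont : ContinuousOn f (Icc y z) := fun t ht =>
      ((key t (hsub ht)).continuousAt).continuousWithinAt
    have hderiv : ∀ t ∈ Ico y z, HasDerivWithinAt f 0 (Ici t) t := fun t ht =>
      (key t (hsub (Ico_subset_Icc_self ht))).hasDerivWithinAt
    exact (constant_of_has_deriv_right_zero hcont hderiv z (right_mem_Icc.2 hyz)).symm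
  intro y hy z hz
  rcases le_total y z with h | h
  · exact main y hy z hz h
  · exact (main z hz y hy h).symm
end

section
/- Consider, for (κ, r) ∈ ℝ × (0,∞) and parameters (φ, ε) ∈ ℝ × [0,∞), the system of two real equations: (E1) ε·(r²/2)(1 − cos 2φ) = −κ(1−κ²) + (ε/8)(7κ⁴ − 4κ² + 1); (E2) 2r² + ε·r·√(r² + r⁴/2)·sin 2φ + ε²(1 − cos 2φ)(r² + r⁴/8) = (1/2)(1−κ²)(1+3κ²) + (ε/2)·κ·(−4κ⁴ + 3κ² − 1). Then there exist ε₀ > 0, C > 0, and continuous functions κ, r: ℝ × [0,ε₀) → ℝ, 2π-periodic in φ, such that κ(φ,0) = 0 and r(φ,0) = 1/2, the pair (κ(φ,ε), r(φ,ε)) satisfies (E1) and (E2) for all (φ,ε) ∈ ℝ × [0,ε₀), and |κ(φ,ε) − (ε/8)·cos 2φ| ≤ C ε² for all φ ∈ ℝ and ε ∈ [0,ε₀). -/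
open Filter Set

namespace SDM

noncomputable section

/-- clamp of the parameter ε to `[0, 1/1000]`. -/
def cl (ε : ℝ) : ℝ := min (max ε 0) (1/1000)

lemma cl_nonneg (ε : ℝ) : 0 ≤ cl ε := le_min (le_max_right _ _) (by norm_num)

lemma cl_le (ε : ℝ) : cl ε ≤ 1/1000 := min_le_right _ _

lemma cl_eq {ε : ℝ} (h0 : 0 ≤ ε) (h1 : ε ≤ 1/1000) : cl ε = ε := by
  unfold cl; rw [max_eq_left h0, min_eq_left h1]

lemma cl_lip (a b : ℝ) : |cl a - cl b| ≤ |a - b| := by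
  have h : LipschitzWith 1 cl := (LipschitzWith.id.max_const 0).min_const (1/1000)
  have h2 := h.dist_le_mul a b
  simpa [Real.dist_eq] using h2

/-- the first component map (from (E1)). -/
def Phi1 (e c k r : ℝ) : ℝ :=
  k^3 + (e/8)*(7*k^4 - 4*k^2 + 1) - e*(r^2/2)*(1-c)

/-- the quantity `A = 2 r²` (from (E2)). -/
def AA (e c s k r : ℝ) : ℝ :=
  (1/2)*(1-k^2)*(1+3*k^2) + (e/2)*(k*(-4*k^4+3*k^2-1))
    - e*(r*Real.sqrt (r^2 + r^4/2)*s) - e^2*((1-c)*(r^2+r^4/8))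

/-- the second component map. -/
def Phi2 (e c s k r : ℝ) : ℝ := Real.sqrt (AA e c s k r / 2)

/-- the invariant ball. -/
def Bset : Set (ℝ × ℝ) := Icc (-(1:ℝ)/10) (1/10) ×ˢ Icc (2/5:ℝ) (3/5)

/- ### elementary helper lemmas -/

lemma abs_sub' (x y : ℝ) : |x - y| ≤ |x| + |y| := by
  calc |x - y| = |x + -y| := by rw [sub_eq_add_neg]
  _ ≤ |x| + |-y| := abs_add_le _ _
  _ = |x| + |y| := by rw [abs_neg]

lemma mul_bound {a b A B : ℝ} (ha : |a| ≤ A) (hb : |b| ≤ B) : |a*b| ≤ A*B := by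
  rw [abs_mul]
  exact mul_le_mul ha hb (abs_nonneg _) ((abs_nonneg a).trans ha)

lemma mul_diff (x y u v : ℝ) : |x*u - y*v| ≤ |x| * |u-v| + |v| * |x-y| := by
  have h : x*u - y*v = x*(u-v) + v*(x-y) := by ring
  rw [h]
  refine (abs_add_le _ _).trans ?_
  rw [abs_mul, abs_mul]

lemma sqrt_le_of_le_sq {a b : ℝ} (hb : 0 ≤ b) (h : a ≤ b^2) : Real.sqrt a ≤ b := by
  rw [show b = Real.sqrt (b^2) from (Real.sqrt_sq hb).symm]
  exact Real.sqrt_le_sqrt h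

lemma le_sqrt_of_sq_le {a b : ℝ} (hb : 0 ≤ b) (h : b^2 ≤ a) : b ≤ Real.sqrt a := by
  rw [show b = Real.sqrt (b^2) from (Real.sqrt_sq hb).symm]
  exact Real.sqrt_le_sqrt h

/-- Lipschitz bound for `sqrt` away from `0`. -/
lemma sqrt_diff {a b : ℝ} (ha : 4/25 ≤ a) (hb : 4/25 ≤ b) :
    |Real.sqrt a - Real.sqrt b| ≤ (5/4) * |a - b| := by
  have ha0 : (0:ℝ) ≤ a := by linarith
  have hb0 : (0:ℝ) ≤ b := by linarith
  have h1 : (2/5 : ℝ) ≤ Real.sqrt a := le_sqrt_of_sq_le (by norm_num) (by norm_num; linarith)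
  have h2 : (2/5 : ℝ) ≤ Real.sqrt b := le_sqrt_of_sq_le (by norm_num) (by norm_num; linarith)
  have key : |a - b| = |Real.sqrt a - Real.sqrt b| * (Real.sqrt a + Real.sqrt b) := by
    rw [← abs_of_nonneg (a := Real.sqrt a + Real.sqrt b) (by linarith), ← abs_mul]
    congr 1
    have hsa : Real.sqrt a ^ 2 = a := Real.sq_sqrt ha0
    have hsb : Real.sqrt b ^ 2 = b := Real.sq_sqrt hb0
    nlinarith [hsa, hsb]
  have h45 : (4/5 : ℝ) * |Real.sqrt a - Real.sqrt b| ≤ |a - b| := by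
    rw [key]
    nlinarith [abs_nonneg (Real.sqrt a - Real.sqrt b)]
  nlinarith [abs_nonneg (a - b)]

lemma cos_lip (a b : ℝ) : |Real.cos a - Real.cos b| ≤ |a - b| := by
  rw [Real.cos_sub_cos]
  have h1 : |Real.sin ((a+b)/2)| ≤ 1 := Real.abs_sin_le_one _
  have h2 : |Real.sin ((a-b)/2)| ≤ |(a-b)/2| := Real.abs_sin_le_abs
  have h3 : |(a-b)/2| = |a-b|/2 := by rw [abs_div]; norm_num
  calc |(-2) * Real.sin ((a+b)/2) * Real.sin ((a-b)/2)|
      = 2 * (|Real.sin ((a+b)/2)| * |Real.sin ((a-b)/2)|) := by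
        rw [abs_mul, abs_mul]; norm_num [mul_assoc]
    _ ≤ 2 * (1 * (|a-b|/2)) := by
        rw [← h3]
        gcongr
    _ ≤ |a - b| := by linarith [abs_nonneg (a-b)]

lemma sin_lip (a b : ℝ) : |Real.sin a - Real.sin b| ≤ |a - b| := by
  rw [Real.sin_sub_sin]
  have h1 : |Real.cos ((a+b)/2)| ≤ 1 := Real.abs_cos_le_one _
  have h2 : |Real.sin ((a-b)/2)| ≤ |(a-b)/2| := Real.abs_sin_le_abs
  have h3 : |(a-b)/2| = |a-b|/2 := by rw [abs_div]; norm_num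
  calc |2 * Real.sin ((a-b)/2) * Real.cos ((a+b)/2)|
      = 2 * (|Real.sin ((a-b)/2)| * |Real.cos ((a+b)/2)|) := by
        rw [abs_mul, abs_mul]; norm_num [mul_assoc]
    _ ≤ 2 * ((|a-b|/2) * 1) := by
        rw [← h3]
        gcongr
    _ ≤ |a - b| := by linarith [abs_nonneg (a-b)]

/- ### range bounds -/

section Bounds

variable {e c s k r : ℝ}
variable (he : 0 ≤ e) (he' : e ≤ 1/1000) (hc : |c| ≤ 1) (hs : |s| ≤ 1)
variable (hk : |k| ≤ 1/10) (hr : 2/5 ≤ r) (hr' : r ≤ 3/5)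

lemma base_bounds {k : ℝ} (hk : |k| ≤ 1/10) :
    49/100 ≤ (1/2)*(1-k^2)*(1+3*k^2) ∧ (1/2)*(1-k^2)*(1+3*k^2) ≤ 51/100 := by
  have hk2 : k^2 ≤ 1/100 := by
    have := abs_le.mp hk; nlinarith
  constructor <;>
    nlinarith [sq_nonneg k, mul_nonneg (sub_nonneg.mpr hk2) (sq_nonneg k)]

lemma P2_bound {k : ℝ} (hk : |k| ≤ 1/10) : |(-4*k^4+3*k^2-1)| ≤ 11/10 := by
  have h := abs_le.mp hk
  have hk2 : k^2 ≤ 1/100 := by nlinarith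
  rw [abs_le]
  constructor <;> nlinarith [sq_nonneg (k^2), sq_nonneg k]

/-- bounds for the inner square root. -/
lemma sqrtB_bounds (hr : 2/5 ≤ r) (hr' : r ≤ 3/5) :
    2/5 ≤ Real.sqrt (r^2 + r^4/2) ∧ Real.sqrt (r^2 + r^4/2) ≤ 7/10 := by
  have h2 : r^2 ≤ 9/25 := by nlinarith
  have h2' : 4/25 ≤ r^2 := by nlinarith
  have h4 : r^4 ≤ 81/625 := by nlinarith [sq_nonneg r, sq_nonneg (r^2)]
  have h4' : 0 ≤ r^4 := by positivity
  constructor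
  · exact le_sqrt_of_sq_le (by norm_num) (by norm_num; linarith)
  · exact sqrt_le_of_le_sq (by norm_num) (by norm_num; linarith)

include he he' hc hs hk hr hr' in
lemma AA_bounds : 48/100 ≤ AA e c s k r ∧ AA e c s k r ≤ 52/100 := by
  obtain ⟨hQ1, hQ2⟩ := sqrtB_bounds hr hr'
  have hQ0 : 0 ≤ Real.sqrt (r^2 + r^4/2) := Real.sqrt_nonneg _
  have hk2 : k^2 ≤ 1/100 := by
    have := abs_le.mp hk
    nlinarith
  have hc' := abs_le.mp hc
  have hs' := abs_le.mp hs
  have hk' := abs_le.mp hk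
  -- term bounds
  have t2 : |(e/2)*(k*(-4*k^4+3*k^2-1))| ≤ e/8 := by
    have h1 : |k*(-4*k^4+3*k^2-1)| ≤ (1/10) * (11/10) := mul_bound hk (P2_bound hk)
    calc |(e/2)*(k*(-4*k^4+3*k^2-1))| ≤ (e/2) * ((1/10)*(11/10)) := by
          apply mul_bound _ h1
          rw [abs_of_nonneg (by linarith)]
      _ ≤ e/8 := by linarith
  have t3 : |e*(r*Real.sqrt (r^2 + r^4/2)*s)| ≤ e * (1/2) := by
    apply mul_bound (by rw [abs_of_nonneg he])
    calc |r*Real.sqrt (r^2 + r^4/2)*s| ≤ ((3/5)*(7/10)) * 1 := by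
          apply mul_bound _ hs
          apply mul_bound _ (by rw [abs_of_nonneg hQ0]; exact hQ2)
          rw [abs_of_nonneg (by linarith)]; exact hr'
      _ ≤ 1/2 := by norm_num
  have hrr : r^2 ≤ 9/25 := by nlinarith
  have hrr' : 4/25 ≤ r^2 := by nlinarith
  have hr4 : r^4 ≤ 81/625 := by nlinarith [sq_nonneg r, sq_nonneg (r^2)]
  have hr4' : 0 ≤ r^4 := by positivity
  have t4 : |e^2*((1-c)*(r^2+r^4/8))| ≤ e * (1/1000) := by
    have he2 : |e^2| ≤ e * (1/1000) := by
      rw [abs_of_nonneg (sq_nonneg e), sq]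
      exact mul_le_mul_of_nonneg_left he' he
    calc |e^2*((1-c)*(r^2+r^4/8))| ≤ (e*(1/1000)) * (2 * (38/100)) := by
          apply mul_bound he2
          apply mul_bound
          · rw [abs_le]; constructor <;> linarith
          · rw [abs_le]; constructor <;> linarith
      _ ≤ e * (1/1000) := by
          linarith [mul_nonneg he (by norm_num : (0:ℝ) ≤ 1/1000)]
  have t2' := abs_le.mp t2
  have t3' := abs_le.mp t3
  have t4' := abs_le.mp t4
  obtain ⟨base_lb, base_ub⟩ := base_bounds hk
  unfold AA
  constructor <;> linarith

include he he' hc hk hr hr' in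
lemma Phi1_mem : |Phi1 e c k r| ≤ 1/10 := by
  have hk' := abs_le.mp hk
  have hc' := abs_le.mp hc
  have hk2 : k^2 ≤ 1/100 := by nlinarith
  have hk3u : k^3 ≤ 1/1000 := by nlinarith
  have hk3l : -(1/1000) ≤ k^3 := by nlinarith
  have hP1 : 7*k^4-4*k^2+1 ≤ 11/10 := by nlinarith [sq_nonneg (k^2), sq_nonneg k]
  have hP0 : (0:ℝ) ≤ 7*k^4-4*k^2+1 := by nlinarith [sq_nonneg (k^2)]
  have hPu : (e/8)*(7*k^4-4*k^2+1) ≤ (1/1000)*(11/10) := by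
    calc (e/8)*(7*k^4-4*k^2+1) ≤ (1/1000)*(7*k^4-4*k^2+1) := by nlinarith
      _ ≤ (1/1000)*(11/10) := by nlinarith
  have hPl : 0 ≤ (e/8)*(7*k^4-4*k^2+1) := by positivity
  have hr2 : r^2 ≤ 9/25 := by nlinarith
  have h1c : (0:ℝ) ≤ 1-c := by linarith
  have h1c' : 1-c ≤ 2 := by linarith
  have htu : e*(r^2/2)*(1-c) ≤ 2/1000 := by
    have h1 : e*(r^2/2) ≤ (1/1000)*(9/50) :=
      mul_le_mul he' (by linarith) (by positivity) (by norm_num)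
    have h0 : (0:ℝ) ≤ e*(r^2/2) := by positivity
    nlinarith
  have htl : 0 ≤ e*(r^2/2)*(1-c) := mul_nonneg (by positivity) h1c
  unfold Phi1
  rw [abs_le]
  constructor <;> linarith

include he he' hc hs hk hr hr' in
lemma Phi2_mem : 2/5 ≤ Phi2 e c s k r ∧ Phi2 e c s k r ≤ 3/5 := by
  obtain ⟨hA1, hA2⟩ := AA_bounds he he' hc hs hk hr hr'
  unfold Phi2
  constructor
  · exact le_sqrt_of_sq_le (by norm_num) (by norm_num; linarith)
  · exact sqrt_le_of_le_sq (by norm_num) (by norm_num; linarith)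

end Bounds

/- ### difference (Lipschitz-type) bounds -/

section Diff

/- standalone polynomial difference bounds (small contexts for nlinarith) -/

lemma kdiff3 {k k' : ℝ} (hk : |k| ≤ 1/10) (hK : |k'| ≤ 1/10) :
    |k^3-k'^3| ≤ (3/100)*|k-k'| := by
  have hk1 := abs_le.mp hk
  have hK1 := abs_le.mp hK
  rw [show k^3-k'^3 = (k^2+k*k'+k'^2)*(k-k') from by ring]
  refine mul_bound ?_ le_rfl
  rw [abs_le]
  constructor <;> nlinarith [sq_nonneg (k+k'), sq_nonneg (k-k')]

lemma ksum_bound {k k' : ℝ} (hk : |k| ≤ 1/10) (hK : |k'| ≤ 1/10) : |k+k'| ≤ 1/5 := by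
  have hk1 := abs_le.mp hk
  have hK1 := abs_le.mp hK
  rw [abs_le]; constructor <;> linarith

lemma kdiffP {k k' : ℝ} (hk : |k| ≤ 1/10) (hK : |k'| ≤ 1/10) :
    |(7*k^4-4*k^2+1) - (7*k'^4-4*k'^2+1)| ≤ 1*|k-k'| := by
  have hk1 := abs_le.mp hk
  have hK1 := abs_le.mp hK
  have hk2 : k^2 ≤ 1/100 := by nlinarith
  have hK2 : k'^2 ≤ 1/100 := by nlinarith
  rw [show (7*k^4-4*k^2+1) - (7*k'^4-4*k'^2+1)
      = ((k+k')*(7*(k^2+k'^2)-4))*(k-k') from by ring]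
  have hin : |(k+k')*(7*(k^2+k'^2)-4)| ≤ 1 := by
    have h1 : |7*(k^2+k'^2)-4| ≤ 5 := by
      rw [abs_le]; constructor <;> nlinarith [sq_nonneg k, sq_nonneg k']
    exact (mul_bound (ksum_bound hk hK) h1).trans (by norm_num)
  exact mul_bound hin le_rfl

lemma P1_bound {k : ℝ} (hk : |k| ≤ 1/10) : |7*k^4-4*k^2+1| ≤ 11/10 := by
  have hk1 := abs_le.mp hk
  have hk2 : k^2 ≤ 1/100 := by nlinarith
  rw [abs_le]
  constructor <;> nlinarith [sq_nonneg (k^2), sq_nonneg k,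
    mul_nonneg (sub_nonneg.mpr hk2) (sq_nonneg k)]

lemma kdiffBase {k k' : ℝ} (hk : |k| ≤ 1/10) (hK : |k'| ≤ 1/10) :
    |(1-k^2)*(1+3*k^2) - (1-k'^2)*(1+3*k'^2)| ≤ (21/50)*|k-k'| := by
  have hk1 := abs_le.mp hk
  have hK1 := abs_le.mp hK
  have hk2 : k^2 ≤ 1/100 := by nlinarith
  have hK2 : k'^2 ≤ 1/100 := by nlinarith
  rw [show (1-k^2)*(1+3*k^2) - (1-k'^2)*(1+3*k'^2)
      = ((k+k')*(2-3*(k^2+k'^2)))*(k-k') from by ring]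
  have hin : |(k+k')*(2-3*(k^2+k'^2))| ≤ 21/50 := by
    have h1 : |2-3*(k^2+k'^2)| ≤ 21/10 := by
      rw [abs_le]; constructor <;> nlinarith [sq_nonneg k, sq_nonneg k']
    exact (mul_bound (ksum_bound hk hK) h1).trans (by norm_num)
  exact mul_bound hin le_rfl

lemma kdiffQ2 {k k' : ℝ} (hk : |k| ≤ 1/10) (hK : |k'| ≤ 1/10) :
    |k*(-4*k^4+3*k^2-1) - k'*(-4*k'^4+3*k'^2-1)| ≤ 2*|k-k'| := by
  have hk1 := abs_le.mp hk
  have hK1 := abs_le.mp hK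
  have hk2 : k^2 ≤ 1/100 := by nlinarith
  have hK2 : k'^2 ≤ 1/100 := by nlinarith
  have m1 : |k*k'| ≤ 1/100 := (mul_bound hk hK).trans (by norm_num)
  have m1' := abs_le.mp m1
  rw [show k*(-4*k^4+3*k^2-1) - k'*(-4*k'^4+3*k'^2-1)
      = (-4*(k^4+k^3*k'+k^2*k'^2+k*k'^3+k'^4) + 3*(k^2+k*k'+k'^2) - 1)*(k-k')
      from by ring]
  refine mul_bound ?_ le_rfl
  have q1 : |k^4+k^3*k'+k^2*k'^2+k*k'^3+k'^4| ≤ 5/10000 := by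
    have a1 : |k^4| ≤ 1/10000 := by
      rw [show k^4 = (k*k)*(k*k) from by ring]
      exact (mul_bound (mul_bound hk hk) (mul_bound hk hk)).trans (by norm_num)
    have a2 : |k^3*k'| ≤ 1/10000 := by
      rw [show k^3*k' = (k*k)*(k*k') from by ring]
      exact (mul_bound (mul_bound hk hk) m1).trans (by norm_num)
    have a3 : |k^2*k'^2| ≤ 1/10000 := by
      rw [show k^2*k'^2 = (k*k')*(k*k') from by ring]
      exact (mul_bound m1 m1).trans (by norm_num)
    have a4 : |k*k'^3| ≤ 1/10000 := by
      rw [show k*k'^3 = (k*k')*(k'*k') from by ring]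
      exact (mul_bound m1 (mul_bound hK hK)).trans (by norm_num)
    have a5 : |k'^4| ≤ 1/10000 := by
      rw [show k'^4 = (k'*k')*(k'*k') from by ring]
      exact (mul_bound (mul_bound hK hK) (mul_bound hK hK)).trans (by norm_num)
    calc |k^4+k^3*k'+k^2*k'^2+k*k'^3+k'^4|
        ≤ |k^4+k^3*k'+k^2*k'^2+k*k'^3| + |k'^4| := abs_add_le _ _
      _ ≤ |k^4+k^3*k'+k^2*k'^2| + |k*k'^3| + |k'^4| := by
          linarith [abs_add_le (k^4+k^3*k'+k^2*k'^2) (k*k'^3)]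
      _ ≤ |k^4+k^3*k'| + |k^2*k'^2| + |k*k'^3| + |k'^4| := by
          linarith [abs_add_le (k^4+k^3*k') (k^2*k'^2)]
      _ ≤ |k^4| + |k^3*k'| + |k^2*k'^2| + |k*k'^3| + |k'^4| := by
          linarith [abs_add_le (k^4) (k^3*k')]
      _ ≤ 5/10000 := by linarith
  have q2 : |k^2+k*k'+k'^2| ≤ 3/100 := by
    rw [abs_le]
    constructor <;> nlinarith [sq_nonneg (k+k'), sq_nonneg (k-k')]
  have q1' := abs_le.mp q1
  have q2' := abs_le.mp q2
  rw [abs_le]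
  constructor <;> linarith

lemma rsum_bound {r r' : ℝ} (hr : 2/5 ≤ r) (hr' : r ≤ 3/5) (hR : 2/5 ≤ r') (hR' : r' ≤ 3/5) :
    |r+r'| ≤ 6/5 := by
  rw [abs_le]; constructor <;> linarith

lemma r2_bound {r : ℝ} (hr : 2/5 ≤ r) (hr' : r ≤ 3/5) : |r^2| ≤ 9/25 := by
  rw [abs_of_nonneg (sq_nonneg r)]; nlinarith

lemma rdiffB {r r' : ℝ} (hr : 2/5 ≤ r) (hr' : r ≤ 3/5) (hR : 2/5 ≤ r') (hR' : r' ≤ 3/5) :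
    |(r^2+r^4/2) - (r'^2+r'^4/2)| ≤ 2*|r-r'| := by
  rw [show (r^2+r^4/2) - (r'^2+r'^4/2)
      = ((r+r')*(1+(r^2+r'^2)/2))*(r-r') from by ring]
  have hin : |(r+r')*(1+(r^2+r'^2)/2)| ≤ 2 := by
    have h1 : |1+(r^2+r'^2)/2| ≤ 7/5 := by
      rw [abs_le]; constructor <;> nlinarith
    exact (mul_bound (rsum_bound hr hr' hR hR') h1).trans (by norm_num)
  exact mul_bound hin le_rfl

lemma rdiffB8 {r r' : ℝ} (hr : 2/5 ≤ r) (hr' : r ≤ 3/5) (hR : 2/5 ≤ r') (hR' : r' ≤ 3/5) :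
    |(r^2+r^4/8) - (r'^2+r'^4/8)| ≤ 2*|r-r'| := by
  rw [show (r^2+r^4/8) - (r'^2+r'^4/8)
      = ((r+r')*(1+(r^2+r'^2)/8))*(r-r') from by ring]
  have hin : |(r+r')*(1+(r^2+r'^2)/8)| ≤ 2 := by
    have h1 : |1+(r^2+r'^2)/8| ≤ 11/10 := by
      rw [abs_le]; constructor <;> nlinarith
    exact (mul_bound (rsum_bound hr hr' hR hR') h1).trans (by norm_num)
  exact mul_bound hin le_rfl

lemma r48_bound {r : ℝ} (hr : 2/5 ≤ r) (hr' : r ≤ 3/5) : |r^2+r^4/8| ≤ 2/5 := by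
  have h2 : r^2 ≤ 9/25 := by nlinarith
  have h4 : r^4 ≤ 81/625 := by
    nlinarith [mul_nonneg (sub_nonneg.mpr h2) (by positivity : (0:ℝ) ≤ 9/25 + r^2)]
  rw [abs_le]
  constructor <;> [nlinarith [sq_nonneg r, sq_nonneg (r^2)]; linarith]

variable {e c s k r e' c' s' k' r' : ℝ}
variable (he : 0 ≤ e) (he'' : e ≤ 1/1000) (hc : |c| ≤ 1) (hs : |s| ≤ 1)
variable (hk : |k| ≤ 1/10) (hr : 2/5 ≤ r) (hr' : r ≤ 3/5)
variable (hE : 0 ≤ e') (hE'' : e' ≤ 1/1000) (hC : |c'| ≤ 1) (hS : |s'| ≤ 1)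
variable (hK : |k'| ≤ 1/10) (hR : 2/5 ≤ r') (hR' : r' ≤ 3/5)

set_option maxHeartbeats 2000000 in
include he he'' hc hk hr hr' hE hE'' hC hK hR hR' in
lemma Phi1_diff :
    |Phi1 e c k r - Phi1 e' c' k' r'| ≤
      (1/10)*|k-k'| + (1/100)*|r-r'| + 2*|e-e'| + (1/100)*|c-c'| := by
  have habse : |e| ≤ 1/1000 := by rw [abs_of_nonneg he]; exact he''
  have hA := kdiff3 hk hK
  have hB : |e*(7*k^4-4*k^2+1) - e'*(7*k'^4-4*k'^2+1)| ≤
      (1/1000)*|k-k'| + (11/10)*|e-e'| := by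
    refine (mul_diff _ _ _ _).trans ?_
    have h1 : |e| * |(7*k^4-4*k^2+1) - (7*k'^4-4*k'^2+1)| ≤ (1/1000)*(1*|k-k'|) :=
      mul_le_mul habse (kdiffP hk hK) (abs_nonneg _) (by norm_num)
    have h2 : |7*k'^4-4*k'^2+1| * |e-e'| ≤ (11/10)*|e-e'| :=
      mul_le_mul_of_nonneg_right (P1_bound hK) (abs_nonneg _)
    linarith
  have hr2 := r2_bound hr hr'
  have hr2' := r2_bound hR hR'
  have h1c' : |1-c'| ≤ 2 := by
    have := abs_le.mp hC
    rw [abs_le]; constructor <;> linarith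
  have hrd : |r^2-r'^2| ≤ (6/5)*|r-r'| := by
    rw [show r^2-r'^2 = (r+r')*(r-r') from by ring]
    exact mul_bound (rsum_bound hr hr' hR hR') le_rfl
  have hCin : |r^2*(1-c) - r'^2*(1-c')| ≤ (9/25)*|c-c'| + (12/5)*|r-r'| := by
    refine (mul_diff _ _ _ _).trans ?_
    have h1 : |r^2| * |(1-c)-(1-c')| ≤ (9/25)*|c-c'| := by
      rw [show (1-c)-(1-c') = -(c-c') from by ring, abs_neg]
      exact mul_le_mul_of_nonneg_right hr2 (abs_nonneg _)
    have h2 : |1-c'| * |r^2-r'^2| ≤ 2*((6/5)*|r-r'|) :=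
      mul_le_mul h1c' hrd (abs_nonneg _) (by norm_num)
    linarith
  have hCout : |r'^2*(1-c')| ≤ 18/25 := (mul_bound hr2' h1c').trans (by norm_num)
  have hCfull : |e*(r^2*(1-c)) - e'*(r'^2*(1-c'))| ≤
      (1/1000)*((9/25)*|c-c'| + (12/5)*|r-r'|) + (18/25)*|e-e'| := by
    refine (mul_diff _ _ _ _).trans ?_
    have h1 : |e| * |r^2*(1-c) - r'^2*(1-c')|
        ≤ (1/1000)*((9/25)*|c-c'| + (12/5)*|r-r'|) :=
      mul_le_mul habse hCin (abs_nonneg _) (by norm_num)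
    have h2 : |r'^2*(1-c')| * |e-e'| ≤ (18/25)*|e-e'| :=
      mul_le_mul_of_nonneg_right hCout (abs_nonneg _)
    linarith
  have hsplit : Phi1 e c k r - Phi1 e' c' k' r' =
      (k^3-k'^3) + (e*(7*k^4-4*k^2+1) - e'*(7*k'^4-4*k'^2+1))/8
        - (e*(r^2*(1-c)) - e'*(r'^2*(1-c')))/2 := by
    unfold Phi1; ring
  rw [hsplit]
  have t1 := abs_add_le (k^3-k'^3)
    ((e*(7*k^4-4*k^2+1) - e'*(7*k'^4-4*k'^2+1))/8)
  have t2 := abs_sub'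
    ((k^3-k'^3) + (e*(7*k^4-4*k^2+1) - e'*(7*k'^4-4*k'^2+1))/8)
    ((e*(r^2*(1-c)) - e'*(r'^2*(1-c')))/2)
  have e1 : |(e*(7*k^4-4*k^2+1) - e'*(7*k'^4-4*k'^2+1))/8|
      = |e*(7*k^4-4*k^2+1) - e'*(7*k'^4-4*k'^2+1)|/8 := by
    rw [abs_div]; norm_num
  have e2 : |(e*(r^2*(1-c)) - e'*(r'^2*(1-c')))/2|
      = |e*(r^2*(1-c)) - e'*(r'^2*(1-c'))|/2 := by
    rw [abs_div]; norm_num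
  rw [e1] at t1
  rw [e2] at t2
  linarith [abs_nonneg (k-k'), abs_nonneg (r-r'), abs_nonneg (e-e'), abs_nonneg (c-c')]

set_option maxHeartbeats 2000000 in
include he he'' hc hs hk hr hr' hE hE'' hC hS hK hR hR' in
lemma AA_diff :
    |AA e c s k r - AA e' c' s' k' r'| ≤
      (1/4)*|k-k'| + (1/10)*|r-r'| + |e-e'| + (1/100)*|c-c'| + (1/100)*|s-s'| := by
  have habse : |e| ≤ 1/1000 := by rw [abs_of_nonneg he]; exact he''
  have habsE : |e'| ≤ 1/1000 := by rw [abs_of_nonneg hE]; exact hE''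
  have h1c : |1-c| ≤ 2 := by
    have := abs_le.mp hc
    rw [abs_le]; constructor <;> linarith
  have h1c' : |1-c'| ≤ 2 := by
    have := abs_le.mp hC
    rw [abs_le]; constructor <;> linarith
  set Q := Real.sqrt (r^2 + r^4/2) with hQdef
  set Q' := Real.sqrt (r'^2 + r'^4/2) with hQdef'
  obtain ⟨hQ1, hQ2⟩ := sqrtB_bounds hr hr'
  obtain ⟨hQ1', hQ2'⟩ := sqrtB_bounds hR hR'
  have hQa : |Q| ≤ 7/10 := by
    rw [abs_of_nonneg (Real.sqrt_nonneg _)]; exact hQ2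
  have hQa' : |Q'| ≤ 7/10 := by
    rw [abs_of_nonneg (Real.sqrt_nonneg _)]; exact hQ2'
  -- D1
  have hD1 := kdiffBase hk hK
  -- D2
  have hkQ' : |k'*(-4*k'^4+3*k'^2-1)| ≤ 11/100 :=
    (mul_bound hK (P2_bound hK)).trans (by norm_num)
  have hD2 : |e*(k*(-4*k^4+3*k^2-1)) - e'*(k'*(-4*k'^4+3*k'^2-1))| ≤
      (1/1000)*(2*|k-k'|) + (11/100)*|e-e'| := by
    refine (mul_diff _ _ _ _).trans ?_
    have h1 : |e| * |k*(-4*k^4+3*k^2-1) - k'*(-4*k'^4+3*k'^2-1)| ≤ (1/1000)*(2*|k-k'|) :=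
      mul_le_mul habse (kdiffQ2 hk hK) (abs_nonneg _) (by norm_num)
    have h2 : |k'*(-4*k'^4+3*k'^2-1)| * |e-e'| ≤ (11/100)*|e-e'| :=
      mul_le_mul_of_nonneg_right hkQ' (abs_nonneg _)
    linarith
  -- D3
  have hQd : |Q - Q'| ≤ (5/2)*|r-r'| := by
    have h1 : (4/25 : ℝ) ≤ r^2 + r^4/2 := by nlinarith [sq_nonneg (r^2)]
    have h2 : (4/25 : ℝ) ≤ r'^2 + r'^4/2 := by nlinarith [sq_nonneg (r'^2)]
    refine (sqrt_diff h1 h2).trans ?_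
    have h3 := rdiffB hr hr' hR hR'
    linarith [abs_nonneg (r-r')]
  have hrQd : |r*Q - r'*Q'| ≤ (9/4)*|r-r'| := by
    refine (mul_diff _ _ _ _).trans ?_
    have h1 : |r| * |Q-Q'| ≤ (3/5)*((5/2)*|r-r'|) :=
      mul_le_mul (by rw [abs_of_nonneg (by linarith)]; exact hr') hQd (abs_nonneg _)
        (by norm_num)
    have h2 : |Q'| * |r-r'| ≤ (7/10)*|r-r'| :=
      mul_le_mul_of_nonneg_right hQa' (abs_nonneg _)
    linarith [abs_nonneg (r-r')]
  have hrQ : |r*Q| ≤ 21/50 := by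
    refine (mul_bound (A := 3/5) ?_ hQa).trans (by norm_num)
    rw [abs_of_nonneg (by linarith)]; exact hr'
  have hrQ' : |r'*Q'| ≤ 21/50 := by
    refine (mul_bound (A := 3/5) ?_ hQa').trans (by norm_num)
    rw [abs_of_nonneg (by linarith)]; exact hR'
  have hin3 : |r*Q*s - r'*Q'*s'| ≤ (21/50)*|s-s'| + 3*|r-r'| := by
    refine (mul_diff _ _ _ _).trans ?_
    have h1 : |r*Q| * |s-s'| ≤ (21/50)*|s-s'| :=
      mul_le_mul_of_nonneg_right hrQ (abs_nonneg _)
    have h2 : |s'| * |r*Q - r'*Q'| ≤ 1*((9/4)*|r-r'|) :=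
      mul_le_mul hS hrQd (abs_nonneg _) (by norm_num)
    linarith [abs_nonneg (r-r')]
  have hout3 : |r'*Q'*s'| ≤ 21/50 := (mul_bound hrQ' hS).trans (by norm_num)
  have hD3 : |e*(r*Q*s) - e'*(r'*Q'*s')| ≤
      (1/1000)*((21/50)*|s-s'| + 3*|r-r'|) + (21/50)*|e-e'| := by
    refine (mul_diff _ _ _ _).trans ?_
    have h1 : |e| * |r*Q*s - r'*Q'*s'| ≤ (1/1000)*((21/50)*|s-s'| + 3*|r-r'|) :=
      mul_le_mul habse hin3 (abs_nonneg _) (by norm_num)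
    have h2 : |r'*Q'*s'| * |e-e'| ≤ (21/50)*|e-e'| :=
      mul_le_mul_of_nonneg_right hout3 (abs_nonneg _)
    linarith
  -- D4
  have hin4 : |(1-c)*(r^2+r^4/8) - (1-c')*(r'^2+r'^4/8)| ≤
      2*(2*|r-r'|) + (2/5)*|c-c'| := by
    refine (mul_diff _ _ _ _).trans ?_
    have h1 : |1-c| * |(r^2+r^4/8) - (r'^2+r'^4/8)| ≤ 2*(2*|r-r'|) :=
      mul_le_mul h1c (rdiffB8 hr hr' hR hR') (abs_nonneg _) (by norm_num)
    have h2 : |r'^2+r'^4/8| * |(1-c)-(1-c')| ≤ (2/5)*|c-c'| := by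
      rw [show (1-c)-(1-c') = -(c-c') from by ring, abs_neg]
      exact mul_le_mul_of_nonneg_right (r48_bound hR hR') (abs_nonneg _)
    linarith
  have hout4 : |(1-c')*(r'^2+r'^4/8)| ≤ 4/5 :=
    (mul_bound h1c' (r48_bound hR hR')).trans (by norm_num)
  have he2 : |e^2| ≤ 1/1000000 := by
    rw [abs_of_nonneg (sq_nonneg _)]
    nlinarith
  have he2d : |e^2 - e'^2| ≤ (1/500)*|e-e'| := by
    rw [show e^2 - e'^2 = (e+e')*(e-e') from by ring]
    refine mul_bound ?_ le_rfl
    rw [abs_le]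
    constructor <;> linarith
  have hD4 : |e^2*((1-c)*(r^2+r^4/8)) - e'^2*((1-c')*(r'^2+r'^4/8))| ≤
      (1/1000000)*(2*(2*|r-r'|) + (2/5)*|c-c'|) + (4/5)*((1/500)*|e-e'|) := by
    refine (mul_diff _ _ _ _).trans ?_
    have h1 : |e^2| * |(1-c)*(r^2+r^4/8) - (1-c')*(r'^2+r'^4/8)| ≤
        (1/1000000)*(2*(2*|r-r'|) + (2/5)*|c-c'|) :=
      mul_le_mul he2 hin4 (abs_nonneg _) (by norm_num)
    have h2 : |(1-c')*(r'^2+r'^4/8)| * |e^2-e'^2| ≤ (4/5)*((1/500)*|e-e'|) :=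
      mul_le_mul hout4 he2d (abs_nonneg _) (by norm_num)
    linarith
  -- assemble
  have hsplit : AA e c s k r - AA e' c' s' k' r' =
      ((1-k^2)*(1+3*k^2) - (1-k'^2)*(1+3*k'^2))/2
        + (e*(k*(-4*k^4+3*k^2-1)) - e'*(k'*(-4*k'^4+3*k'^2-1)))/2
        - (e*(r*Q*s) - e'*(r'*Q'*s'))
        - (e^2*((1-c)*(r^2+r^4/8)) - e'^2*((1-c')*(r'^2+r'^4/8))) := by
    unfold AA; rw [← hQdef, ← hQdef']; ring
  rw [hsplit]
  set a1 := (1-k^2)*(1+3*k^2) - (1-k'^2)*(1+3*k'^2) with ha1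
  set a2 := e*(k*(-4*k^4+3*k^2-1)) - e'*(k'*(-4*k'^4+3*k'^2-1)) with ha2
  set a3 := e*(r*Q*s) - e'*(r'*Q'*s') with ha3
  set a4 := e^2*((1-c)*(r^2+r^4/8)) - e'^2*((1-c')*(r'^2+r'^4/8)) with ha4
  have t1 := abs_add_le (a1/2) (a2/2)
  have t2 := abs_sub' (a1/2 + a2/2) a3
  have t3 := abs_sub' (a1/2 + a2/2 - a3) a4
  have e1 : |a1/2| = |a1|/2 := by rw [abs_div]; norm_num
  have e2 : |a2/2| = |a2|/2 := by rw [abs_div]; norm_num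
  rw [e1, e2] at t1
  linarith [abs_nonneg (k-k'), abs_nonneg (r-r'), abs_nonneg (e-e'),
    abs_nonneg (c-c'), abs_nonneg (s-s')]

set_option maxHeartbeats 2000000 in
include he he'' hc hs hk hr hr' hE hE'' hC hS hK hR hR' in
lemma Phi2_diff :
    |Phi2 e c s k r - Phi2 e' c' s' k' r'| ≤
      (1/4)*|k-k'| + (1/10)*|r-r'| + |e-e'| + (1/100)*|c-c'| + (1/100)*|s-s'| := by
  obtain ⟨hA1, _⟩ := AA_bounds he he'' hc hs hk hr hr'
  obtain ⟨hA1', _⟩ := AA_bounds hE hE'' hC hS hK hR hR'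
  have h := sqrt_diff (a := AA e c s k r / 2) (b := AA e' c' s' k' r' / 2)
    (by linarith) (by linarith)
  have h2 : |AA e c s k r / 2 - AA e' c' s' k' r' / 2|
      = |AA e c s k r - AA e' c' s' k' r'| / 2 := by
    rw [show AA e c s k r / 2 - AA e' c' s' k' r' / 2
        = (AA e c s k r - AA e' c' s' k' r')/2 from by ring]
    rw [abs_div]; norm_num
  have h3 := AA_diff he he'' hc hs hk hr hr' hE hE'' hC hS hK hR hR'
  rw [h2] at h
  unfold Phi2
  refine h.trans ?_
  linarith [abs_nonneg (k-k'), abs_nonneg (r-r'), abs_nonneg (e-e'),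
    abs_nonneg (c-c'), abs_nonneg (s-s')]

end Diff

/- ### the fixed point map -/

instance : Nonempty ↥Bset := ⟨⟨(0, 1/2), by constructor <;> constructor <;> norm_num⟩⟩

instance : CompleteSpace ↥Bset := (isClosed_Icc.prod isClosed_Icc).completeSpace_coe

/-- membership facts for a point of the ball. -/
lemma mem_Bset {x : ℝ × ℝ} (hx : x ∈ Bset) :
    |x.1| ≤ 1/10 ∧ 2/5 ≤ x.2 ∧ x.2 ≤ 3/5 := by
  obtain ⟨⟨h1, h2⟩, h3, h4⟩ := hx
  exact ⟨abs_le.mpr ⟨by linarith, h2⟩, h3, h4⟩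

/-- The parametrized map on the ball. -/
def T (q : ℝ × ℝ) (x : ↥Bset) : ↥Bset :=
  ⟨(Phi1 (cl q.2) (Real.cos (2*q.1)) x.1.1 x.1.2,
    Phi2 (cl q.2) (Real.cos (2*q.1)) (Real.sin (2*q.1)) x.1.1 x.1.2), by
    obtain ⟨hk, hr, hr'⟩ := mem_Bset x.2
    have he := cl_nonneg q.2
    have he' := cl_le q.2
    have hc := Real.abs_cos_le_one (2*q.1)
    have hs := Real.abs_sin_le_one (2*q.1)
    constructor
    · have := Phi1_mem he he' hc hk hr hr'
      have := abs_le.mp this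
      constructor <;> [linarith [this.1]; linarith [this.2]]
    · obtain ⟨h1, h2⟩ := Phi2_mem he he' hc hs hk hr hr'
      exact ⟨h1, h2⟩⟩

lemma T_contract (q : ℝ × ℝ) : ContractingWith (1/2 : NNReal) (T q) := by
  constructor
  · rw [show (1/2 : NNReal) = 2⁻¹ by norm_num]
    exact inv_lt_one_of_one_lt₀ one_lt_two
  · apply LipschitzWith.of_dist_le_mul
    intro x y
    obtain ⟨hk, hr, hr'⟩ := mem_Bset x.2
    obtain ⟨hK, hR, hR'⟩ := mem_Bset y.2
    have he := cl_nonneg q.2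
    have he' := cl_le q.2
    have hc := Real.abs_cos_le_one (2*q.1)
    have hs := Real.abs_sin_le_one (2*q.1)
    have h1 := Phi1_diff he he' hc hk hr hr' he he' hc hK hR hR'
      (e' := cl q.2) (c' := Real.cos (2*q.1))
    have h2 := Phi2_diff he he' hc hs hk hr hr' he he' hc hs hK hR hR'
      (e' := cl q.2) (c' := Real.cos (2*q.1)) (s' := Real.sin (2*q.1))
    simp only [sub_self, abs_zero] at h1 h2
    have hd : dist x y = max (dist x.1.1 y.1.1) (dist x.1.2 y.1.2) := by
      rw [Subtype.dist_eq, Prod.dist_eq]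
    have hdk : |x.1.1 - y.1.1| ≤ dist x y := by
      rw [hd, Real.dist_eq]; exact le_max_left _ _
    have hdr : |x.1.2 - y.1.2| ≤ dist x y := by
      rw [hd, Real.dist_eq]; exact le_max_right _ _
    have hcoe : ((1/2 : NNReal) : ℝ) = 1/2 := by norm_num
    rw [Subtype.dist_eq, Prod.dist_eq, hcoe]
    have hd0 : (0:ℝ) ≤ dist x y := dist_nonneg
    apply max_le <;> rw [Real.dist_eq]
    · exact h1.trans (by linarith)
    · exact h2.trans (by linarith)

/-- The solution branch as a fixed point. -/
def F (q : ℝ × ℝ) : ↥Bset := ContractingWith.fixedPoint (T q) (T_contract q)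

lemma F_fix (q : ℝ × ℝ) : T q (F q) = F q := (T_contract q).fixedPoint_isFixedPt

lemma F_eq1 (q : ℝ × ℝ) :
    Phi1 (cl q.2) (Real.cos (2*q.1)) (F q).1.1 (F q).1.2 = (F q).1.1 :=
  congrArg (fun z : ↥Bset => z.1.1) (F_fix q)

lemma F_eq2 (q : ℝ × ℝ) :
    Phi2 (cl q.2) (Real.cos (2*q.1)) (Real.sin (2*q.1)) (F q).1.1 (F q).1.2 = (F q).1.2 :=
  congrArg (fun z : ↥Bset => z.1.2) (F_fix q)

lemma F_mem (q : ℝ × ℝ) : |(F q).1.1| ≤ 1/10 ∧ 2/5 ≤ (F q).1.2 ∧ (F q).1.2 ≤ 3/5 :=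
  mem_Bset (F q).2

/-- the squared form of the second fixed-point equation. -/
lemma F_eq2' (q : ℝ × ℝ) :
    2 * (F q).1.2^2 = AA (cl q.2) (Real.cos (2*q.1)) (Real.sin (2*q.1)) (F q).1.1 (F q).1.2 := by
  obtain ⟨hk, hr, hr'⟩ := F_mem q
  have he := cl_nonneg q.2
  have he' := cl_le q.2
  have hc := Real.abs_cos_le_one (2*q.1)
  have hs := Real.abs_sin_le_one (2*q.1)
  obtain ⟨hA1, hA2⟩ := AA_bounds he he' hc hs hk hr hr'
  have h := F_eq2 q
  unfold Phi2 at h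
  have h2 : (F q).1.2^2
      = AA (cl q.2) (Real.cos (2*q.1)) (Real.sin (2*q.1)) (F q).1.1 (F q).1.2 / 2 := by
    conv_lhs => rw [← h]
    exact Real.sq_sqrt (by linarith)
  linarith

/-- Lipschitz dependence of the fixed point on the parameters. -/
lemma F_lip (p q : ℝ × ℝ) : dist (F p) (F q) ≤ 6 * dist p q := by
  have key : ∀ z : ↥Bset, dist (T p z) (T q z) ≤ 3 * dist p q := by
    intro z
    obtain ⟨hk, hr, hr'⟩ := mem_Bset z.2
    have hep := cl_nonneg p.2
    have hep' := cl_le p.2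
    have hcp := Real.abs_cos_le_one (2*p.1)
    have hsp := Real.abs_sin_le_one (2*p.1)
    have heq := cl_nonneg q.2
    have heq' := cl_le q.2
    have hcq := Real.abs_cos_le_one (2*q.1)
    have hsq := Real.abs_sin_le_one (2*q.1)
    have h1 := Phi1_diff hep hep' hcp hk hr hr' heq heq' hcq hk hr hr'
      (e' := cl q.2) (c' := Real.cos (2*q.1))
    have h2 := Phi2_diff hep hep' hcp hsp hk hr hr' heq heq' hcq hsq hk hr hr'
      (e' := cl q.2) (c' := Real.cos (2*q.1)) (s' := Real.sin (2*q.1))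
    simp only [sub_self, abs_zero] at h1 h2
    have hde : |cl p.2 - cl q.2| ≤ dist p q := by
      refine (cl_lip _ _).trans ?_
      rw [Prod.dist_eq, Real.dist_eq]; exact le_max_right _ _
    have hphi : |p.1 - q.1| ≤ dist p q := by
      rw [Prod.dist_eq, Real.dist_eq]; exact le_max_left _ _
    have hdc : |Real.cos (2*p.1) - Real.cos (2*q.1)| ≤ 2 * dist p q := by
      refine (cos_lip _ _).trans ?_
      calc |2*p.1 - 2*q.1| = 2 * |p.1 - q.1| := by
            rw [show 2*p.1 - 2*q.1 = 2*(p.1-q.1) by ring, abs_mul]; norm_num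
        _ ≤ 2 * dist p q := by linarith
    have hds : |Real.sin (2*p.1) - Real.sin (2*q.1)| ≤ 2 * dist p q := by
      refine (sin_lip _ _).trans ?_
      calc |2*p.1 - 2*q.1| = 2 * |p.1 - q.1| := by
            rw [show 2*p.1 - 2*q.1 = 2*(p.1-q.1) by ring, abs_mul]; norm_num
        _ ≤ 2 * dist p q := by linarith
    have hd0 : (0:ℝ) ≤ dist p q := dist_nonneg
    rw [Subtype.dist_eq, Prod.dist_eq]
    apply max_le <;> rw [Real.dist_eq]
    · exact h1.trans (by linarith)
    · exact h2.trans (by linarith)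
  have h := (T_contract p).fixedPoint_lipschitz_in_map (hg := T_contract q)
    (C := 3 * dist p q) key
  have hcoe : (1 : ℝ) - ((1/2 : NNReal) : ℝ) = 1/2 := by norm_num
  rw [hcoe] at h
  calc dist (F p) (F q) ≤ 3 * dist p q / (1/2) := h
    _ = 6 * dist p q := by ring

/-- continuity of the fixed point in the parameters. -/
lemma F_cont : Continuous (fun p : ℝ × ℝ => ((F p : ℝ × ℝ))) := by
  have hl : LipschitzWith 6 F := by
    apply LipschitzWith.of_dist_le_mul
    intro p q
    have := F_lip p q
    have hcoe : ((6 : NNReal) : ℝ) = 6 := by norm_num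
    rw [hcoe]
    exact this
  exact continuous_subtype_val.comp hl.continuous

/-- periodicity of the map in φ. -/
lemma T_per (φ ε : ℝ) : T (φ + 2*Real.pi, ε) = T (φ, ε) := by
  have hcc : Real.cos (2*(φ + 2*Real.pi)) = Real.cos (2*φ) := by
    rw [show 2*(φ + 2*Real.pi) = 2*φ + 2*Real.pi + 2*Real.pi from by ring,
      Real.cos_add_two_pi, Real.cos_add_two_pi]
  have hss : Real.sin (2*(φ + 2*Real.pi)) = Real.sin (2*φ) := by
    rw [show 2*(φ + 2*Real.pi) = 2*φ + 2*Real.pi + 2*Real.pi from by ring,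
      Real.sin_add_two_pi, Real.sin_add_two_pi]
  funext x
  apply Subtype.ext
  show (Phi1 (cl (φ + 2*Real.pi, ε).2) (Real.cos (2*(φ + 2*Real.pi, ε).1)) x.1.1 x.1.2,
        Phi2 (cl (φ + 2*Real.pi, ε).2) (Real.cos (2*(φ + 2*Real.pi, ε).1))
          (Real.sin (2*(φ + 2*Real.pi, ε).1)) x.1.1 x.1.2)
      = (Phi1 (cl (φ, ε).2) (Real.cos (2*(φ, ε).1)) x.1.1 x.1.2,
        Phi2 (cl (φ, ε).2) (Real.cos (2*(φ, ε).1)) (Real.sin (2*(φ, ε).1)) x.1.1 x.1.2)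
  dsimp only
  rw [hcc, hss]

lemma F_per (φ ε : ℝ) : F (φ + 2*Real.pi, ε) = F (φ, ε) := by
  have h := F_fix (φ + 2*Real.pi, ε)
  rw [T_per] at h
  exact (T_contract (φ, ε)).fixedPoint_unique h

/-- value at ε = 0. -/
lemma F_at0 (φ : ℝ) : (F (φ, 0)).1.1 = 0 ∧ (F (φ, 0)).1.2 = 1/2 := by
  have hcl : cl ((φ, (0:ℝ)).2) = 0 := by
    show cl 0 = 0
    unfold cl; norm_num
  obtain ⟨hk, hr, hr'⟩ := F_mem (φ, 0)
  have h1 := F_eq1 (φ, 0)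
  rw [hcl] at h1
  unfold Phi1 at h1
  have hkz : (F (φ,0)).1.1 * (1 - ((F (φ,0)).1.1)^2) = 0 := by linear_combination -h1
  have hk2 : ((F (φ,0)).1.1)^2 ≤ 1/100 := by
    have := abs_le.mp hk
    nlinarith
  have hk0 : (F (φ,0)).1.1 = 0 := by
    rcases mul_eq_zero.mp hkz with h | h
    · exact h
    · nlinarith
  refine ⟨hk0, ?_⟩
  have h2 := F_eq2' (φ, 0)
  rw [hcl, hk0] at h2
  unfold AA at h2
  have h2' : 2 * ((F (φ,0)).1.2)^2 = 1/2 := by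
    rw [h2]; ring
  have hfac : ((F (φ,0)).1.2 - 1/2) * ((F (φ,0)).1.2 + 1/2) = 0 := by
    linear_combination h2'/2
  rcases mul_eq_zero.mp hfac with h | h
  · linarith
  · linarith

set_option maxHeartbeats 4000000 in
/-- the final quantitative estimate. -/
lemma final_bound {e c s k r Q : ℝ} (he : 0 ≤ e) (he' : e ≤ 1/1000)
    (hc : |c| ≤ 1) (hs : |s| ≤ 1) (hk : |k| ≤ 1/10) (hr : 2/5 ≤ r) (hr' : r ≤ 3/5)
    (hQ0 : 0 ≤ Q) (hQ : Q ≤ 7/10)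
    (h1 : k^3 + (e/8)*(7*k^4-4*k^2+1) - e*(r^2/2)*(1-c) = k)
    (h2 : 2*r^2 = (1/2)*(1-k^2)*(1+3*k^2) + (e/2)*(k*(-4*k^4+3*k^2-1))
      - e*(r*Q*s) - e^2*((1-c)*(r^2+r^4/8))) :
    |k - (e/8)*c| ≤ e^2 := by
  have hc' := abs_le.mp hc
  have hs' := abs_le.mp hs
  have hk1 := abs_le.mp hk
  have hk2 : k^2 ≤ 1/100 := by nlinarith
  have habse : |e| ≤ e := by rw [abs_of_nonneg he]
  have habsQ : |Q| ≤ 7/10 := by rw [abs_of_nonneg hQ0]; exact hQ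
  have habsr : |r| ≤ 3/5 := by rw [abs_of_nonneg (by linarith)]; exact hr'
  have hr2 : r^2 ≤ 9/25 := by nlinarith
  -- step 1 : |k| ≤ e
  have hP : 0 ≤ 7*k^4-4*k^2+1 := by nlinarith [sq_nonneg (k^2)]
  have hP' : 7*k^4-4*k^2+1 ≤ 11/10 := by
    have := abs_le.mp (P1_bound hk); linarith [this.2]
  have hterm1 : 0 ≤ (e/8)*(7*k^4-4*k^2+1) := by positivity
  have hterm1' : (e/8)*(7*k^4-4*k^2+1) ≤ (11/80)*e := by nlinarith
  have hterm2 : 0 ≤ e*(r^2/2)*(1-c) :=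
    mul_nonneg (mul_nonneg he (by positivity)) (by linarith)
  have hterm2' : e*(r^2/2)*(1-c) ≤ (9/25)*e := by
    have h1' : e*(r^2/2) ≤ e*(9/50) :=
      mul_le_mul_of_nonneg_left (by linarith) he
    have h0 : (0:ℝ) ≤ e*(r^2/2) := mul_nonneg he (by positivity)
    calc e*(r^2/2)*(1-c) ≤ (e*(r^2/2))*2 :=
          mul_le_mul_of_nonneg_left (by linarith) h0
      _ ≤ (e*(9/50))*2 := by linarith
      _ = (9/25)*e := by ring
  have hke : |k| ≤ e := by
    rw [abs_le]
    constructor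
    · rcases le_total 0 k with hpos | hneg
      · linarith
      · linarith [mul_nonneg (neg_nonneg.mpr hneg) (sub_nonneg.mpr hk2), h1]
    · rcases le_total k 0 with hneg | hpos
      · linarith
      · linarith [mul_nonneg hpos (sub_nonneg.mpr hk2), h1]
  -- step 2 : |2r² − 1/2| ≤ e
  have hsplit2 : 2*r^2 - 1/2 = (k^2 - (3/2)*k^4)
      + (e/2)*(k*(-4*k^4+3*k^2-1)) - e*(r*Q*s) - e^2*((1-c)*(r^2+r^4/8)) := by
    linear_combination h2
  have b1 : |k^2 - (3/2)*k^4| ≤ (e*1)*(1/10) := by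
    rw [show k^2 - (3/2)*k^4 = (k*(1-(3/2)*k^2))*k from by ring]
    refine mul_bound (mul_bound hke ?_) hk
    rw [abs_le]; constructor <;> linarith [sq_nonneg k]
  have habse2 : |e/2| ≤ e/2 := le_of_eq (abs_of_nonneg (div_nonneg he (by norm_num)))
  have b2 : |(e/2)*(k*(-4*k^4+3*k^2-1))| ≤ (e/2)*(11/100) :=
    mul_bound habse2 ((mul_bound hk (P2_bound hk)).trans (by norm_num))
  have b3 : |e*(r*Q*s)| ≤ e*(21/50) := by
    refine mul_bound habse ?_
    refine (mul_bound (mul_bound habsr habsQ) hs).trans (by norm_num)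
  have habsee : |e^2| ≤ e*(1/1000) := by
    rw [abs_of_nonneg (sq_nonneg e), sq]
    exact mul_le_mul_of_nonneg_left he' he
  have h1cb : |1-c| ≤ 2 := by rw [abs_le]; constructor <;> linarith
  have b4 : |e^2*((1-c)*(r^2+r^4/8))| ≤ (e*(1/1000))*(2*(2/5)) :=
    mul_bound habsee (mul_bound h1cb (r48_bound hr hr'))
  have hAB : |2*r^2 - 1/2| ≤ e := by
    rw [hsplit2]
    have t1 := abs_add_le (k^2 - (3/2)*k^4) ((e/2)*(k*(-4*k^4+3*k^2-1)))
    have t2 := abs_sub' ((k^2 - (3/2)*k^4) + (e/2)*(k*(-4*k^4+3*k^2-1))) (e*(r*Q*s))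
    have t3 := abs_sub' ((k^2 - (3/2)*k^4) + (e/2)*(k*(-4*k^4+3*k^2-1)) - e*(r*Q*s))
      (e^2*((1-c)*(r^2+r^4/8)))
    linarith
  -- step 3 : conclusion
  have hfin : k - (e/8)*c = k^3 + (e/8)*(7*k^4-4*k^2)
      - (e/2)*((2*r^2-1/2)/2)*(1-c) := by
    linear_combination -h1
  have c1 : |k^3| ≤ ((e*e)*(1/10)) := by
    rw [show k^3 = (k*k)*k from by ring]
    exact mul_bound (mul_bound hke hke) hk
  have habse8 : |e/8| ≤ e/8 := le_of_eq (abs_of_nonneg (div_nonneg he (by norm_num)))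
  have c2 : |(e/8)*(7*k^4-4*k^2)| ≤ (e/8)*(((1/10)*(41/10))*e) := by
    refine mul_bound habse8 ?_
    rw [show 7*k^4-4*k^2 = (k*(7*k^2-4))*k from by ring]
    refine mul_bound (mul_bound hk ?_) hke
    rw [abs_le]; constructor <;> linarith [sq_nonneg k]
  have c3 : |(e/2)*((2*r^2-1/2)/2)*(1-c)| ≤ ((e/2)*(e/2))*2 := by
    refine mul_bound (mul_bound habse2 ?_) h1cb
    rw [abs_div, abs_two]
    have := hAB
    linarith [abs_nonneg (2*r^2-1/2)]
  rw [hfin]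
  have t1 := abs_add_le (k^3) ((e/8)*(7*k^4-4*k^2))
  have t2 := abs_sub' (k^3 + (e/8)*(7*k^4-4*k^2)) ((e/2)*((2*r^2-1/2)/2)*(1-c))
  linarith [show e*e = e^2 from by ring, sq_nonneg e]

end

end SDM

open SDM in
/-- **Leading-order strain–displacement relation via matched conserved
quantities.** The system (E1)–(E2), obtained by matching the conserved
quantities along the transformed unstable manifold (parametrized by r, φ) with
their values on the ε-perturbed periodic orbits of wavenumber κ, has a branch
of solutions (κ(φ,ε), r(φ,ε)), continuous on ℝ × [0,ε₀) and 2π-periodic in φ,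
with κ(φ,0) = 0, r(φ,0) = 1/2 and κ(φ,ε) = (ε/8)cos 2φ + O(ε²). -/
theorem strain_displacement_matching :
    ∃ ε₀ > (0 : ℝ), ∃ C > (0 : ℝ), ∃ κ r : ℝ → ℝ → ℝ,
      ContinuousOn (fun p : ℝ × ℝ => κ p.1 p.2) (Set.univ ×ˢ Set.Ico 0 ε₀) ∧
      ContinuousOn (fun p : ℝ × ℝ => r p.1 p.2) (Set.univ ×ˢ Set.Ico 0 ε₀) ∧
      (∀ φ ε : ℝ, κ (φ + 2 * Real.pi) ε = κ φ ε) ∧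
      (∀ φ ε : ℝ, r (φ + 2 * Real.pi) ε = r φ ε) ∧
      (∀ φ : ℝ, κ φ 0 = 0) ∧
      (∀ φ : ℝ, r φ 0 = 1 / 2) ∧
      (∀ φ : ℝ, ∀ ε ∈ Set.Ico (0 : ℝ) ε₀,
        0 < r φ ε ∧
        -- (E1)
        ε * ((r φ ε) ^ 2 / 2) * (1 - Real.cos (2 * φ))
          = -(κ φ ε) * (1 - (κ φ ε) ^ 2)
            + (ε / 8) * (7 * (κ φ ε) ^ 4 - 4 * (κ φ ε) ^ 2 + 1) ∧
        -- (E2)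
        2 * (r φ ε) ^ 2
            + ε * (r φ ε) * Real.sqrt ((r φ ε) ^ 2 + (r φ ε) ^ 4 / 2) * Real.sin (2 * φ)
            + ε ^ 2 * (1 - Real.cos (2 * φ)) * ((r φ ε) ^ 2 + (r φ ε) ^ 4 / 8)
          = (1 / 2) * (1 - (κ φ ε) ^ 2) * (1 + 3 * (κ φ ε) ^ 2)
            + (ε / 2) * (κ φ ε) * (-4 * (κ φ ε) ^ 4 + 3 * (κ φ ε) ^ 2 - 1)) ∧
      (∀ φ : ℝ, ∀ ε ∈ Set.Ico (0 : ℝ) ε₀,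
        |κ φ ε - (ε / 8) * Real.cos (2 * φ)| ≤ C * ε ^ 2) := by
  refine ⟨1/1000, by norm_num, 1, by norm_num,
    (fun φ ε => (F (φ, ε)).1.1), (fun φ ε => (F (φ, ε)).1.2), ?_, ?_, ?_, ?_, ?_, ?_, ?_, ?_⟩
  · exact (F_cont.fst).continuousOn
  · exact (F_cont.snd).continuousOn
  · intro φ ε
    exact congrArg (fun z : ↥Bset => z.1.1) (F_per φ ε)
  · intro φ ε
    exact congrArg (fun z : ↥Bset => z.1.2) (F_per φ ε)
  · intro φ
    exact (F_at0 φ).1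
  · intro φ
    exact (F_at0 φ).2
  · intro φ ε hε
    obtain ⟨hε0, hε1⟩ := hε
    obtain ⟨hk, hr, hr'⟩ := F_mem (φ, ε)
    have h1 := F_eq1 (φ, ε)
    dsimp only at h1
    rw [cl_eq hε0 hε1.le] at h1
    unfold Phi1 at h1
    have h2 := F_eq2' (φ, ε)
    dsimp only at h2
    rw [cl_eq hε0 hε1.le] at h2
    unfold AA at h2
    refine ⟨by linarith, ?_, ?_⟩
    · dsimp only
      linear_combination -h1
    · dsimp only
      linear_combination h2
  · intro φ ε hε
    obtain ⟨hε0, hε1⟩ := hε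
    obtain ⟨hk, hr, hr'⟩ := F_mem (φ, ε)
    have h1 := F_eq1 (φ, ε)
    dsimp only at h1
    rw [cl_eq hε0 hε1.le] at h1
    unfold Phi1 at h1
    have h2 := F_eq2' (φ, ε)
    dsimp only at h2
    rw [cl_eq hε0 hε1.le] at h2
    unfold AA at h2
    dsimp only
    rw [one_mul]
    exact final_bound hε0 hε1.le (Real.abs_cos_le_one _) (Real.abs_sin_le_one _)
      hk hr hr' (Real.sqrt_nonneg _) (sqrtB_bounds hr hr').2 h1 h2
end
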